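/- arXiv:1806.07682 — 9 statements merged into one kernel-verified Lean document; each statement's English description precedes it below -/
import Mathlib

section
/- Let A be an n×n real strictly diagonally dominant matrix, i.e. |a_{ii}| > Σ_{j≠i} |a_{ij}| for all i. Fix a natural number m < n and let T_m, E_m, F_m be the banded decomposition A = T_m − E_m − F_m, where (T_m)_{ij} = a_{ij} if |i−j| ≤ m and 0 otherwise, (E_m)_{ij} = −a_{ij} if i > j+m and 0 otherwise, (F_m)_{ij} = −a_{ij} if j > i+m and 0 otherwise. Then T_m is invertible and every complex eigenvalue λ of T_m⁻¹(E_m + F_m) satisfies |λ| < 1 (so the generalized Jacobi iteration converges for every initial guess). -/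
open Matrix Finset

/-- A strictly diagonally dominant matrix (w.r.t. an absolute value) has
trivial kernel. -/
lemma sdd_mulVec_eq_zero {K : Type*} [Field K] (ab : AbsoluteValue K ℝ)
    {n : ℕ} (M : Matrix (Fin n) (Fin n) K)
    (h : ∀ i, ∑ j ∈ Finset.univ.erase i, ab (M i j) < ab (M i i))
    {v : Fin n → K} (hv : M.mulVec v = 0) : v = 0 := by
  by_contra hv0
  obtain ⟨k, hk⟩ : ∃ k, v k ≠ 0 := by
    by_contra h'; push_neg at h'; exact hv0 (funext h')
  obtain ⟨i, -, hi⟩ := Finset.exists_max_image (univ : Finset (Fin n))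
    (fun j => ab (v j)) ⟨k, mem_univ k⟩
  have hvi : 0 < ab (v i) := lt_of_lt_of_le (ab.pos hk) (hi k (mem_univ k))
  have h0 : ∑ j, M i j * v j = 0 := congrFun hv i
  have hsplit : M i i * v i + ∑ j ∈ univ.erase i, M i j * v j = 0 := by
    rw [Finset.add_sum_erase univ (fun j => M i j * v j) (mem_univ i)]; exact h0
  have hdiag : M i i * v i = -∑ j ∈ univ.erase i, M i j * v j := by linear_combination hsplit
  have hle : ab (M i i) * ab (v i) ≤ (∑ j ∈ univ.erase i, ab (M i j)) * ab (v i) := by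
    calc ab (M i i) * ab (v i) = ab (M i i * v i) := (ab.map_mul _ _).symm
      _ = ab (∑ j ∈ univ.erase i, M i j * v j) := by rw [hdiag, ab.map_neg]
      _ ≤ ∑ j ∈ univ.erase i, ab (M i j * v j) := ab.sum_le _ _
      _ ≤ ∑ j ∈ univ.erase i, ab (M i j) * ab (v i) := by
          refine Finset.sum_le_sum fun j _ => ?_
          rw [ab.map_mul]
          exact mul_le_mul_of_nonneg_left (hi j (mem_univ j)) (ab.nonneg _)
      _ = (∑ j ∈ univ.erase i, ab (M i j)) * ab (v i) := (Finset.sum_mul _ _ _).symm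
  have := mul_lt_mul_of_pos_right (h i) hvi
  linarith

/-- Generalized Jacobi converges for strictly diagonally dominant matrices. -/
theorem gj_converges_of_sdd (n m : ℕ) (hm : m < n)
    (A T E F : Matrix (Fin n) (Fin n) ℝ)
    (hSDD : ∀ i, ∑ j ∈ Finset.univ.erase i, |A i j| < |A i i|)
    (hT : ∀ i j, T i j = if |(i : ℤ) - (j : ℤ)| ≤ (m : ℤ) then A i j else 0)
    (hE : ∀ i j, E i j = if (j : ℤ) + (m : ℤ) < (i : ℤ) then -A i j else 0)
    (hF : ∀ i j, F i j = if (i : ℤ) + (m : ℤ) < (j : ℤ) then -A i j else 0) :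
    IsUnit T ∧
      ∀ (lam : ℂ) (v : Fin n → ℂ), v ≠ 0 →
        ((T⁻¹ * (E + F)).map (Complex.ofReal)).mulVec v = lam • v →
        ‖lam‖ < 1 := by
  -- Diagonal facts
  have hTd : ∀ i, T i i = A i i := fun i => by
    rw [hT]; simp
  -- T is SDD
  have hTSDD : ∀ i, ∑ j ∈ Finset.univ.erase i, |T i j| < |T i i| := by
    intro i
    rw [hTd]
    refine lt_of_le_of_lt (Finset.sum_le_sum fun j _ => ?_) (hSDD i)
    rw [hT]; split <;> simp [abs_nonneg]
  -- T is invertible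
  have hdet : T.det ≠ 0 := by
    intro hdet0
    obtain ⟨v, hv0, hv⟩ := Matrix.exists_mulVec_eq_zero_iff.mpr hdet0
    exact hv0 (sdd_mulVec_eq_zero AbsoluteValue.abs T hTSDD hv)
  have hUnit : IsUnit T := (Matrix.isUnit_iff_isUnit_det T).mpr (isUnit_iff_ne_zero.mpr hdet)
  refine ⟨hUnit, ?_⟩
  intro lam v hv0 hvec
  by_contra hlam
  push_neg at hlam
  have hlam1 : (1 : ℝ) ≤ ‖lam‖ := hlam
  have hlampos : (0 : ℝ) < ‖lam‖ := lt_of_lt_of_le one_pos hlam1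
  set T' : Matrix (Fin n) (Fin n) ℂ := T.map Complex.ofReal with hT'
  set S' : Matrix (Fin n) (Fin n) ℂ := (E + F).map Complex.ofReal with hS'
  have hTT : T * T⁻¹ = 1 := Matrix.mul_nonsing_inv T (isUnit_iff_ne_zero.mpr hdet)
  have hmapmul : T' * ((T⁻¹ * (E + F)).map Complex.ofReal) = S' := by
    have : (Complex.ofReal : ℝ → ℂ) = ⇑Complex.ofRealHom := rfl
    rw [hT', hS', this, ← Matrix.map_mul, ← mul_assoc, hTT, one_mul]
  have hkey : S'.mulVec v = lam • T'.mulVec v := by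
    calc S'.mulVec v = (T' * ((T⁻¹ * (E + F)).map Complex.ofReal)).mulVec v := by rw [hmapmul]
      _ = T'.mulVec (((T⁻¹ * (E + F)).map Complex.ofReal).mulVec v) := by
          rw [Matrix.mulVec_mulVec]
      _ = T'.mulVec (lam • v) := by rw [hvec]
      _ = lam • T'.mulVec v := Matrix.mulVec_smul _ _ _
  set M : Matrix (Fin n) (Fin n) ℂ := lam • T' - S' with hM
  have hMv : M.mulVec v = 0 := by
    rw [hM, Matrix.sub_mulVec, Matrix.smul_mulVec, hkey, sub_self]
  -- entrywise bound
  have hMentry : ∀ i j, ‖M i j‖ ≤ ‖lam‖ * |A i j| := by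
    intro i j
    have hMij : M i j = lam * Complex.ofReal (T i j) - Complex.ofReal (E i j + F i j) := by
      simp [hM, hT', hS', Matrix.map_apply, Matrix.sub_apply, Matrix.smul_apply,
        Matrix.add_apply, smul_eq_mul]
    by_cases hb : |(i : ℤ) - (j : ℤ)| ≤ (m : ℤ)
    · obtain ⟨hb1, hb2⟩ := abs_le.mp hb
      have hE0 : E i j = 0 := by rw [hE]; rw [if_neg]; omega
      have hF0 : F i j = 0 := by rw [hF]; rw [if_neg]; omega
      have hTij : T i j = A i j := by rw [hT, if_pos hb]
      rw [hMij, hE0, hF0, hTij]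
      simp only [Complex.ofReal_zero, add_zero, sub_zero, norm_mul,
        Complex.norm_real, Real.norm_eq_abs]
      exact le_refl _
    · have hb' := lt_abs.mp (lt_of_not_ge hb)
      have hTij : T i j = 0 := by rw [hT, if_neg hb]
      have hEF : E i j + F i j = -A i j := by
        rw [hE, hF]
        rcases hb' with h1 | h1
        · rw [if_pos (by omega), if_neg (by omega)]; ring
        · rw [if_neg (by omega), if_pos (by omega)]; ring
      rw [hMij, hTij, hEF]
      simp only [Complex.ofReal_zero, mul_zero, zero_sub, map_neg, Complex.ofReal_neg,
        norm_neg, Complex.norm_real, Real.norm_eq_abs]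
      calc |A i j| = 1 * |A i j| := (one_mul _).symm
        _ ≤ ‖lam‖ * |A i j| := mul_le_mul_of_nonneg_right hlam1 (abs_nonneg _)
  have hMdiag : ∀ i, ‖M i i‖ = ‖lam‖ * |A i i| := by
    intro i
    have hE0 : E i i = 0 := by rw [hE]; rw [if_neg]; omega
    have hF0 : F i i = 0 := by rw [hF]; rw [if_neg]; omega
    have hMij : M i i = lam * Complex.ofReal (A i i) := by
      simp [hM, hT', hS', Matrix.map_apply, Matrix.sub_apply, Matrix.smul_apply,
        Matrix.add_apply, smul_eq_mul, hE0, hF0, hTd]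
    rw [hMij, norm_mul, Complex.norm_real, Real.norm_eq_abs]
  have hMSDD : ∀ i, ∑ j ∈ Finset.univ.erase i, ‖M i j‖ < ‖M i i‖ := by
    intro i
    calc ∑ j ∈ univ.erase i, ‖M i j‖
        ≤ ∑ j ∈ univ.erase i, ‖lam‖ * |A i j| :=
          Finset.sum_le_sum fun j _ => hMentry i j
      _ = ‖lam‖ * ∑ j ∈ univ.erase i, |A i j| := (Finset.mul_sum _ _ _).symm
      _ < ‖lam‖ * |A i i| := by
          exact mul_lt_mul_of_pos_left (hSDD i) hlampos
      _ = ‖M i i‖ := (hMdiag i).symm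
  exact hv0 (sdd_mulVec_eq_zero (NormedField.toAbsoluteValue ℂ) M hMSDD hMv)
end

section
/- Let A be an n×n real strictly diagonally dominant matrix. Fix m < n and let A = T_m − E_m − F_m be the banded decomposition. Then T_m − E_m is invertible and every complex eigenvalue λ of (T_m − E_m)⁻¹ F_m satisfies |λ| < 1 (so the generalized Gauss–Seidel iteration converges for every initial guess). -/
open Matrix Finset

/-- Generalized Gauss–Seidel converges for strictly diagonally dominant matrices. -/
theorem ggs_converges_of_sdd (n m : ℕ) (hm : m < n)
    (A T E F : Matrix (Fin n) (Fin n) ℝ)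
    (hSDD : ∀ i, ∑ j ∈ Finset.univ.erase i, |A i j| < |A i i|)
(hT : ∀ i j, T i j = if |(i : ℤ) - (j : ℤ)| ≤ (m : ℤ) then A i j else 0)
    (hE : ∀ i j, E i j = if (j : ℤ) + (m : ℤ) < (i : ℤ) then -A i j else 0)
    (hF : ∀ i j, F i j = if (i : ℤ) + (m : ℤ) < (j : ℤ) then -A i j else 0) :
    IsUnit (T - E) ∧
      ∀ (lam : ℂ) (v : Fin n → ℂ), v ≠ 0 →
        (((T - E)⁻¹ * F).map (Complex.ofReal)).mulVec v = lam • v →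
        ‖lam‖ < 1 := by
  set L := T - E with hLdef
  -- entrywise description of L
  have hLentry : ∀ i j, L i j = if (j : ℤ) ≤ (i : ℤ) + m then A i j else 0 := by
    intro i j
    have : L i j = T i j - E i j := rfl
    rw [this, hT, hE]
    simp only [abs_sub_le_iff]
    split_ifs <;> first | ring1 | (exfalso; omega)
  -- L is strictly diagonally dominant
  have hLsum : ∀ i, ∑ j ∈ Finset.univ.erase i, ‖L i j‖ < ‖L i i‖ := by
    intro i
    have h1 : ∑ j ∈ Finset.univ.erase i, ‖L i j‖ ≤ ∑ j ∈ Finset.univ.erase i, |A i j| := by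
      refine Finset.sum_le_sum fun j _ => ?_
      rw [hLentry, Real.norm_eq_abs]
      split_ifs <;> simp [abs_nonneg]
    have h2 : ‖L i i‖ = |A i i| := by
      rw [hLentry, Real.norm_eq_abs, if_pos (by omega)]
    rw [h2]
    exact lt_of_le_of_lt h1 (hSDD i)
  have hdetL : L.det ≠ 0 := det_ne_zero_of_sum_row_lt_diag hLsum
  have hUnitdet : IsUnit L.det := isUnit_iff_ne_zero.mpr hdetL
  have hUnitL : IsUnit L := (Matrix.isUnit_iff_isUnit_det L).mpr hUnitdet
  refine ⟨hUnitL, fun lam v hv hveq => ?_⟩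
  by_contra hcon
  push_neg at hcon
  have hlam0 : (0 : ℝ) < ‖lam‖ := lt_of_lt_of_le one_pos hcon
  set Lc := L.map Complex.ofReal with hLc
  set Fc := F.map Complex.ofReal with hFc
  have hmapmul : ∀ (P Q : Matrix (Fin n) (Fin n) ℝ),
      (P * Q).map Complex.ofReal = P.map Complex.ofReal * Q.map Complex.ofReal := by
    intro P Q
    ext i j
    simp [Matrix.mul_apply, Matrix.map_apply]
  -- F v = lam • (L v) over ℂ
  have hmul : Fc.mulVec v = lam • Lc.mulVec v := by
    have h1 : Lc.mulVec (((L⁻¹ * F).map Complex.ofReal).mulVec v) = Fc.mulVec v := by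
      rw [Matrix.mulVec_mulVec, hLc, ← hmapmul, ← Matrix.mul_assoc,
        Matrix.mul_nonsing_inv L hUnitdet, Matrix.one_mul]
    rw [← h1, hveq, Matrix.mulVec_smul]
  set M : Matrix (Fin n) (Fin n) ℂ := lam • Lc - Fc with hM
  have hMv : M.mulVec v = 0 := by
    rw [hM, Matrix.sub_mulVec, Matrix.smul_mulVec, hmul, sub_self]
  have hMentry : ∀ i j, M i j =
      if (j : ℤ) ≤ (i : ℤ) + m then lam * (A i j : ℂ) else (A i j : ℂ) := by
    intro i j
    have : M i j = lam * (L i j : ℂ) - (F i j : ℂ) := by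
      simp [hM, hLc, hFc, Matrix.sub_apply, Matrix.map_apply]
    rw [this, hLentry, hF]
    split_ifs <;> first | (push_cast; ring1) | (exfalso; omega)
  have hMrow : ∀ i, ∑ j ∈ Finset.univ.erase i, ‖M i j‖ < ‖M i i‖ := by
    intro i
    have hd : ‖M i i‖ = ‖lam‖ * |A i i| := by
      rw [hMentry, if_pos (by omega), norm_mul, Complex.norm_real, Real.norm_eq_abs]
    have hb : ∀ j, ‖M i j‖ ≤ ‖lam‖ * |A i j| := by
      intro j
      rw [hMentry]
      split_ifs
      · rw [norm_mul, Complex.norm_real, Real.norm_eq_abs]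
      · rw [Complex.norm_real, Real.norm_eq_abs]
        exact le_mul_of_one_le_left (abs_nonneg _) hcon
    calc ∑ j ∈ Finset.univ.erase i, ‖M i j‖
        ≤ ∑ j ∈ Finset.univ.erase i, ‖lam‖ * |A i j| :=
          Finset.sum_le_sum fun j _ => hb j
      _ = ‖lam‖ * ∑ j ∈ Finset.univ.erase i, |A i j| := by
          rw [Finset.mul_sum]
      _ < ‖lam‖ * |A i i| := by
          exact mul_lt_mul_of_pos_left (hSDD i) hlam0
      _ = ‖M i i‖ := hd.symm
  have hdetM : M.det ≠ 0 := det_ne_zero_of_sum_row_lt_diag hMrow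
  have hinj : Function.Injective M.mulVec :=
    Matrix.mulVec_injective_iff_isUnit.mpr
      ((Matrix.isUnit_iff_isUnit_det M).mpr (isUnit_iff_ne_zero.mpr hdetM))
  exact hv (hinj (by simpa using hMv))
end

section
/- Let A be an n×n nonsingular M-matrix, i.e. a_{ij} ≤ 0 for all i ≠ j, A is invertible, and A⁻¹ is entrywise nonnegative. Fix m < n and let A = T_m − E_m − F_m be the banded decomposition. Then T_m is invertible and every complex eigenvalue λ of T_m⁻¹(E_m + F_m) satisfies |λ| < 1 (generalized Jacobi converges for every initial guess). -/
open Matrix Finset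

/-- A row of a nonnegative matrix with `(M * W) i i = 1` has positive row sum. -/
lemma gj_row_pos {n : ℕ} (M W : Matrix (Fin n) (Fin n) ℝ)
    (hM : ∀ i j, 0 ≤ M i j) (i : Fin n) (h : (M * W) i i = 1) :
    0 < M.mulVec (fun _ => 1) i := by
  rw [Matrix.mul_apply] at h
  have hex : ∃ j ∈ Finset.univ, 0 < M i j := by
    by_contra hcon
    push_neg at hcon
    have hz : ∀ j ∈ Finset.univ, M i j * W j i = 0 := by
      intro j hj
      have h0 : M i j = 0 := le_antisymm (hcon j hj) (hM i j)
      rw [h0, zero_mul]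
    rw [Finset.sum_congr rfl hz] at h
    simp at h
  simp only [Matrix.mulVec, dotProduct, mul_one]
  exact Finset.sum_pos' (fun j _ => hM i j) hex

/-- Key lemma: a Z-matrix `T` with a positive vector `x` such that `T x > 0`
is inverse-nonnegative: `T u ≥ 0 → u ≥ 0`. -/
lemma gj_key {n : ℕ} (T : Matrix (Fin n) (Fin n) ℝ) (x : Fin n → ℝ)
    (hx : ∀ i, 0 < x i) (hTx : ∀ i, 0 < T.mulVec x i)
    (hZT : ∀ i j, i ≠ j → T i j ≤ 0)
    (u : Fin n → ℝ) (hu : ∀ i, 0 ≤ T.mulVec u i) : ∀ i, 0 ≤ u i := by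
  intro i
  obtain ⟨k, -, hmin⟩ := Finset.exists_min_image Finset.univ (fun i => u i / x i)
    ⟨i, Finset.mem_univ i⟩
  set c := u k / x k with hc
  by_cases hc0 : 0 ≤ c
  · have h1 : c ≤ u i / x i := hmin i (Finset.mem_univ i)
    have h2 : 0 ≤ u i / x i := le_trans hc0 h1
    have := mul_nonneg h2 (le_of_lt (hx i))
    rwa [div_mul_cancel₀ _ (ne_of_gt (hx i))] at this
  · push_neg at hc0
    have huk : u k = c * x k := by
      rw [hc, div_mul_cancel₀ _ (ne_of_gt (hx k))]
    have hge : ∀ j, c * x j ≤ u j := by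
      intro j
      have h1 : c ≤ u j / x j := hmin j (Finset.mem_univ j)
      have := mul_le_mul_of_nonneg_right h1 (le_of_lt (hx j))
      rwa [div_mul_cancel₀ _ (ne_of_gt (hx j))] at this
    have hle : T.mulVec u k ≤ c * T.mulVec x k := by
      simp only [Matrix.mulVec, dotProduct, Finset.mul_sum]
      apply Finset.sum_le_sum
      intro j _
      by_cases hj : j = k
      · subst hj; rw [huk]; ring_nf; exact le_refl _
      · have h1 : T k j ≤ 0 := hZT k j (Ne.symm hj)
        calc T k j * u j ≤ T k j * (c * x j) := mul_le_mul_of_nonpos_left (hge j) h1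
          _ = c * (T k j * x j) := by ring
    have h2 : c * T.mulVec x k < 0 := mul_neg_of_neg_of_pos hc0 (hTx k)
    have h3 := hu k
    linarith

/-- Generalized Jacobi converges for nonsingular M-matrices. -/
theorem gj_converges_of_Mmatrix (n m : ℕ) (hm : m < n)
    (A T E F : Matrix (Fin n) (Fin n) ℝ)
    (hZ : ∀ i j, i ≠ j → A i j ≤ 0)
    (hA : IsUnit A)
    (hAinv : ∀ i j, 0 ≤ A⁻¹ i j)
(hT : ∀ i j, T i j = if |(i : ℤ) - (j : ℤ)| ≤ (m : ℤ) then A i j else 0)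
    (hE : ∀ i j, E i j = if (j : ℤ) + (m : ℤ) < (i : ℤ) then -A i j else 0)
    (hF : ∀ i j, F i j = if (i : ℤ) + (m : ℤ) < (j : ℤ) then -A i j else 0) :
    IsUnit T ∧
      ∀ (lam : ℂ) (v : Fin n → ℂ), v ≠ 0 →
        ((T⁻¹ * (E + F)).map (Complex.ofReal)).mulVec v = lam • v →
        ‖lam‖ < 1 := by
  have hdetA : IsUnit A.det := (Matrix.isUnit_iff_isUnit_det A).mp hA
  set N : Matrix (Fin n) (Fin n) ℝ := E + F with hN
  have hne : ∀ i j : Fin n, (j : ℤ) + (m : ℤ) < (i : ℤ) ∨ (i : ℤ) + (m : ℤ) < (j : ℤ) → i ≠ j := by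
    intro i j h hEq
    subst hEq
    omega
  -- N is entrywise nonnegative
  have hNnn : ∀ i j, 0 ≤ N i j := by
    intro i j
    rw [hN, Matrix.add_apply, hE, hF]
    have hEnn : (0:ℝ) ≤ if (j : ℤ) + (m : ℤ) < (i : ℤ) then -A i j else 0 := by
      split_ifs with h
      · linarith [hZ i j (hne i j (Or.inl h))]
      · exact le_refl 0
    have hFnn : (0:ℝ) ≤ if (i : ℤ) + (m : ℤ) < (j : ℤ) then -A i j else 0 := by
      split_ifs with h
      · linarith [hZ i j (hne i j (Or.inr h))]
      · exact le_refl 0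
    linarith
  -- T = A + N as matrices
  have hTmat : T = A + N := by
    ext i j
    rw [Matrix.add_apply, hN, Matrix.add_apply, hT, hE, hF]
    rcases le_or_gt (|(i : ℤ) - (j : ℤ)|) (m : ℤ) with h1 | h1
    · rw [if_pos h1, if_neg, if_neg]
      · ring
      · rw [abs_le] at h1; omega
      · rw [abs_le] at h1; omega
    · rw [if_neg (not_le.mpr h1)]
      rw [lt_abs] at h1
      rcases h1 with h2 | h2
      · rw [if_pos (by omega), if_neg (by omega)]
        ring
      · rw [if_neg (by omega), if_pos (by omega)]
        ring
  -- T is a Z-matrix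
  have hTZ : ∀ i j, i ≠ j → T i j ≤ 0 := by
    intro i j hij
    rw [hT]
    split_ifs with h
    · exact hZ i j hij
    · exact le_refl 0
  -- the positive vector x = A⁻¹ 𝟙
  set x : Fin n → ℝ := A⁻¹.mulVec (fun _ => 1) with hx
  have hxnn : ∀ i, 0 ≤ x i := by
    intro i
    rw [hx]
    simp only [Matrix.mulVec, dotProduct, mul_one]
    exact Finset.sum_nonneg fun j _ => hAinv i j
  have hxpos : ∀ i, 0 < x i := by
    intro i
    have h1 : (A⁻¹ * A) i i = 1 := by
      rw [Matrix.nonsing_inv_mul A hdetA, Matrix.one_apply_eq]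
    exact gj_row_pos A⁻¹ A hAinv i h1
  have hAx : A.mulVec x = fun _ => 1 := by
    rw [hx, Matrix.mulVec_mulVec, Matrix.mul_nonsing_inv A hdetA, Matrix.one_mulVec]
  -- T x > 0
  have hNx : ∀ i, 0 ≤ N.mulVec x i := by
    intro i
    simp only [Matrix.mulVec, dotProduct]
    exact Finset.sum_nonneg fun j _ => mul_nonneg (hNnn i j) (hxnn j)
  have hTx : ∀ i, 0 < T.mulVec x i := by
    intro i
    have h1 : T.mulVec x = A.mulVec x + N.mulVec x := by
      rw [hTmat, Matrix.add_mulVec]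
    rw [h1, Pi.add_apply, hAx]
    have := hNx i
    simp only []
    linarith
  -- T is invertible
  have hTkey := gj_key T x hxpos hTx hTZ
  have hTdet : IsUnit T.det := by
    by_contra hcon
    have hdet0 : T.det = 0 := by
      rcases eq_or_ne T.det 0 with h | h
      · exact h
      · exact absurd (isUnit_iff_ne_zero.mpr h) hcon
    obtain ⟨v, hv0, hv⟩ := Matrix.exists_mulVec_eq_zero_iff.mpr hdet0
    have h1 : ∀ i, 0 ≤ v i := hTkey v (fun i => by rw [hv]; exact le_refl 0)
    have h2 : ∀ i, 0 ≤ (-v) i := by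
      apply hTkey
      intro i
      rw [Matrix.mulVec_neg, hv]
      simp
    apply hv0
    funext i
    have ha := h1 i
    have hb := h2 i
    rw [Pi.neg_apply] at hb
    have : v i = 0 := le_antisymm (by linarith) ha
    simpa using this
  have hTunit : IsUnit T := (Matrix.isUnit_iff_isUnit_det T).mpr hTdet
  refine ⟨hTunit, ?_⟩
  -- T⁻¹ is entrywise nonnegative
  have hTinv_mul : T⁻¹ * T = 1 := Matrix.nonsing_inv_mul T hTdet
  have hmul_Tinv : T * T⁻¹ = 1 := Matrix.mul_nonsing_inv T hTdet
  have hTinvnn : ∀ i j, 0 ≤ T⁻¹ i j := by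
    intro i j
    have h1 : ∀ k, 0 ≤ T.mulVec (T⁻¹.mulVec (Pi.single j 1)) k := by
      intro k
      rw [Matrix.mulVec_mulVec, hmul_Tinv, Matrix.one_mulVec]
      by_cases hkj : k = j
      · subst hkj; simp
      · simp [Pi.single_apply, hkj]
    have h2 := hTkey (T⁻¹.mulVec (Pi.single j 1)) h1 i
    simpa [Matrix.mulVec, dotProduct, Pi.single_apply, mul_ite] using h2
  -- z = T⁻¹ 𝟙 is entrywise positive
  set z : Fin n → ℝ := T⁻¹.mulVec (fun _ => 1) with hz
  have hzpos : ∀ i, 0 < z i := by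
    intro i
    have h1 : (T⁻¹ * T) i i = 1 := by rw [hTinv_mul, Matrix.one_apply_eq]
    exact gj_row_pos T⁻¹ T hTinvnn i h1
  -- G = T⁻¹ N ≥ 0 and G x = x - z
  set G : Matrix (Fin n) (Fin n) ℝ := T⁻¹ * N with hG
  have hGnn : ∀ i j, 0 ≤ G i j := by
    intro i j
    rw [hG, Matrix.mul_apply]
    exact Finset.sum_nonneg fun k _ => mul_nonneg (hTinvnn i k) (hNnn k j)
  have hGx : G.mulVec x = x - z := by
    have hNmat : N = T - A := by rw [hTmat]; abel
    rw [hG, ← Matrix.mulVec_mulVec, hNmat, Matrix.sub_mulVec, hAx,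
      Matrix.mulVec_sub, Matrix.mulVec_mulVec, hTinv_mul, Matrix.one_mulVec, hz]
  have hGxlt : ∀ i, G.mulVec x i < x i := by
    intro i
    rw [hGx, Pi.sub_apply]
    linarith [hzpos i]
  -- eigenvalue bound
  intro lam v hv hev
  have hnpos : 0 < n := lt_of_le_of_lt (Nat.zero_le m) hm
  -- entrywise inequality for the absolute values
  have habs : ∀ i, ‖lam‖ * ‖v i‖ ≤ ∑ j, G i j * ‖v j‖ := by
    intro i
    have h1 : ∑ j, (Complex.ofReal (G i j)) * v j = lam * v i := by
      have h2 := congrFun hev i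
      simpa [Matrix.mulVec, dotProduct, Matrix.map_apply, Pi.smul_apply,
        smul_eq_mul] using h2
    calc ‖lam‖ * ‖v i‖ = ‖lam * v i‖ := (norm_mul _ _).symm
      _ = ‖∑ j, (Complex.ofReal (G i j)) * v j‖ := by rw [h1]
      _ ≤ ∑ j, ‖(Complex.ofReal (G i j)) * v j‖ := norm_sum_le _ _
      _ = ∑ j, G i j * ‖v j‖ := by
          refine Finset.sum_congr rfl fun j _ => ?_
          rw [norm_mul, Complex.norm_real, Real.norm_eq_abs, abs_of_nonneg (hGnn i j)]
  -- maximize |v i| / x i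
  obtain ⟨k, -, hmax⟩ := Finset.exists_max_image Finset.univ
    (fun i => ‖v i‖ / x i) ⟨⟨0, hnpos⟩, Finset.mem_univ _⟩
  set c := ‖v k‖ / x k with hcdef
  obtain ⟨i0, hi0⟩ := Function.ne_iff.mp hv
  have hvi0 : 0 < ‖v i0‖ := by
    simpa [norm_pos_iff] using hi0
  have hcpos : 0 < c := by
    have h1 : ‖v i0‖ / x i0 ≤ c := hmax i0 (Finset.mem_univ i0)
    have h2 : 0 < ‖v i0‖ / x i0 := div_pos hvi0 (hxpos i0)
    linarith
  have hwle : ∀ j, ‖v j‖ ≤ c * x j := by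
    intro j
    have h1 : ‖v j‖ / x j ≤ c := hmax j (Finset.mem_univ j)
    have := mul_le_mul_of_nonneg_right h1 (le_of_lt (hxpos j))
    rwa [div_mul_cancel₀ _ (ne_of_gt (hxpos j))] at this
  have hwk : ‖v k‖ = c * x k := by
    rw [hcdef, div_mul_cancel₀ _ (ne_of_gt (hxpos k))]
  have hfinal : ‖lam‖ * (c * x k) < c * x k := by
    calc ‖lam‖ * (c * x k) = ‖lam‖ * ‖v k‖ := by rw [hwk]
      _ ≤ ∑ j, G k j * ‖v j‖ := habs k
      _ ≤ ∑ j, G k j * (c * x j) := by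
          refine Finset.sum_le_sum fun j _ => ?_
          exact mul_le_mul_of_nonneg_left (hwle j) (hGnn k j)
      _ = c * G.mulVec x k := by
          simp only [Matrix.mulVec, dotProduct, Finset.mul_sum]
          exact Finset.sum_congr rfl fun j _ => by ring
      _ < c * x k := by
          exact mul_lt_mul_of_pos_left (hGxlt k) hcpos
  have hcx : 0 < c * x k := mul_pos hcpos (hxpos k)
  have := lt_of_mul_lt_mul_right (by linarith [hfinal] : ‖lam‖ * (c * x k) < 1 * (c * x k)) (le_of_lt hcx)
  linarith
end

section
/- Let A be an n×n nonsingular M-matrix (nonpositive off-diagonal entries, invertible, entrywise nonnegative inverse). Fix m < n and let A = T_m − E_m − F_m be the banded decomposition. Then T_m − E_m is invertible and every complex eigenvalue λ of (T_m − E_m)⁻¹ F_m satisfies |λ| < 1 (generalized Gauss–Seidel converges for every initial guess). -/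
open Matrix Finset

lemma ggs_core {n : ℕ} (A M F : Matrix (Fin n) (Fin n) ℝ) (x : Fin n → ℝ)
    (hx : ∀ i, 0 < x i) (hAx : ∀ i, ∑ j, A i j * x j = 1)
    (hMd : ∀ i, M i i = A i i) (hFd : ∀ i, F i i = 0)
    (hMF : ∀ i j, j ≠ i → |M i j| + |F i j| = -A i j)
    (μ : ℂ) (hμ : ‖μ‖ ≤ 1) (v : Fin n → ℂ)
    (hv : (M.map Complex.ofReal) *ᵥ v = μ • ((F.map Complex.ofReal) *ᵥ v)) :
    v = 0 := by
  by_contra hv0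
  obtain ⟨j0, hj0⟩ := Function.ne_iff.mp hv0
  obtain ⟨i, -, hi⟩ := Finset.exists_max_image Finset.univ
    (fun j => ‖v j‖ / x j) ⟨j0, Finset.mem_univ j0⟩
  set c := ‖v i‖ / x i with hc
  have hcpos : 0 < c :=
    lt_of_lt_of_le (div_pos (by simpa using hj0) (hx j0)) (hi j0 (Finset.mem_univ _))
  have hvb : ∀ j, ‖v j‖ ≤ c * x j := by
    intro j
    have h := hi j (Finset.mem_univ j)
    have := (div_le_iff₀ (hx j)).mp h
    linarith [this]
  have hvi : ‖v i‖ = c * x i :=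
    (div_mul_cancel₀ _ (hx i).ne').symm
  have h1 := congrFun hv i
  simp only [Matrix.mulVec, dotProduct, Matrix.map_apply, Pi.smul_apply,
    smul_eq_mul] at h1
  rw [← Finset.sum_erase_add _ _ (Finset.mem_univ i),
      ← Finset.sum_erase_add (f := fun j => (Complex.ofReal (F i j)) * v j) _
        (Finset.mem_univ i)] at h1
  rw [hMd i, hFd i] at h1
  have key : (A i i : ℂ) * v i = μ * (∑ j ∈ Finset.univ.erase i, (F i j : ℂ) * v j)
      - ∑ j ∈ Finset.univ.erase i, (M i j : ℂ) * v j := by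
    push_cast at h1 ⊢
    linear_combination h1
  -- sum identity
  have e1 : ∑ j ∈ Finset.univ.erase i, (-A i j) * x j = A i i * x i - 1 := by
    have h2 := hAx i
    rw [← Finset.sum_erase_add _ _ (Finset.mem_univ i)] at h2
    have : ∑ j ∈ Finset.univ.erase i, -(A i j * x j) =
        -∑ j ∈ Finset.univ.erase i, A i j * x j := by
      rw [Finset.sum_neg_distrib]
    simp only [neg_mul]
    rw [this]
    linarith
  -- bound the RHS
  have cSF : ‖∑ j ∈ Finset.univ.erase i, (F i j : ℂ) * v j‖ ≤
      ∑ j ∈ Finset.univ.erase i, |F i j| * (c * x j) := by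
    refine le_trans (norm_sum_le _ _) (Finset.sum_le_sum fun j hj => ?_)
    rw [norm_mul, Complex.norm_real, Real.norm_eq_abs]
    exact mul_le_mul_of_nonneg_left (hvb j) (abs_nonneg _)
  have cSM : ‖∑ j ∈ Finset.univ.erase i, (M i j : ℂ) * v j‖ ≤
      ∑ j ∈ Finset.univ.erase i, |M i j| * (c * x j) := by
    refine le_trans (norm_sum_le _ _) (Finset.sum_le_sum fun j hj => ?_)
    rw [norm_mul, Complex.norm_real, Real.norm_eq_abs]
    exact mul_le_mul_of_nonneg_left (hvb j) (abs_nonneg _)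
  have cmain : ‖(A i i : ℂ) * v i‖ ≤ c * (A i i * x i - 1) := by
    rw [key]
    calc ‖_‖ ≤ ‖μ * ∑ j ∈ Finset.univ.erase i, (F i j : ℂ) * v j‖
          + ‖∑ j ∈ Finset.univ.erase i, (M i j : ℂ) * v j‖ :=
        norm_sub_le _ _
      _ ≤ (∑ j ∈ Finset.univ.erase i, |F i j| * (c * x j))
          + ∑ j ∈ Finset.univ.erase i, |M i j| * (c * x j) := by
        rw [norm_mul]
        refine add_le_add (le_trans ?_ cSF) cSM
        calc ‖μ‖ * ‖_‖ ≤ 1 * ‖_‖ :=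
            mul_le_mul_of_nonneg_right hμ (norm_nonneg _)
          _ = _ := one_mul _
      _ = ∑ j ∈ Finset.univ.erase i, (|F i j| + |M i j|) * (c * x j) := by
        rw [← Finset.sum_add_distrib]
        exact Finset.sum_congr rfl fun j hj => by ring
      _ = ∑ j ∈ Finset.univ.erase i, (-A i j) * x j * c := by
        refine Finset.sum_congr rfl fun j hj => ?_
        have hji : j ≠ i := Finset.ne_of_mem_erase hj
        rw [← hMF i j hji]
        ring
      _ = c * (A i i * x i - 1) := by
        rw [← Finset.sum_mul, e1]; ring
  have clhs : A i i * (c * x i) ≤ ‖(A i i : ℂ) * v i‖ := by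
    rw [norm_mul, Complex.norm_real, Real.norm_eq_abs, hvi]
    exact mul_le_mul_of_nonneg_right (le_abs_self _) (mul_nonneg hcpos.le (hx i).le)
  nlinarith [clhs, cmain, hcpos, hx i]

/-- Generalized Gauss–Seidel converges for nonsingular M-matrices. -/
theorem ggs_converges_of_Mmatrix (n m : ℕ) (hm : m < n)
    (A T E F : Matrix (Fin n) (Fin n) ℝ)
    (hZ : ∀ i j, i ≠ j → A i j ≤ 0)
    (hA : IsUnit A)
    (hAinv : ∀ i j, 0 ≤ A⁻¹ i j)
(hT : ∀ i j, T i j = if |(i : ℤ) - (j : ℤ)| ≤ (m : ℤ) then A i j else 0)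
    (hE : ∀ i j, E i j = if (j : ℤ) + (m : ℤ) < (i : ℤ) then -A i j else 0)
    (hF : ∀ i j, F i j = if (i : ℤ) + (m : ℤ) < (j : ℤ) then -A i j else 0) :
    IsUnit (T - E) ∧
      ∀ (lam : ℂ) (v : Fin n → ℂ), v ≠ 0 →
        (((T - E)⁻¹ * F).map (Complex.ofReal)).mulVec v = lam • v →
        ‖lam‖ < 1 := by
  set M := T - E with hMdef
  have hAdet : IsUnit A.det := (Matrix.isUnit_iff_isUnit_det A).mp hA
  -- structural facts about M and F
  have hMd : ∀ i, M i i = A i i := by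
    intro i
    have h1 : |(i : ℤ) - (i : ℤ)| ≤ (m : ℤ) := by simp
    have h2 : ¬ ((i : ℤ) + (m : ℤ) < (i : ℤ)) := by omega
    simp [hMdef, Matrix.sub_apply, hT, hE, h1, h2]
  have hFd : ∀ i, F i i = 0 := by
    intro i
    have h2 : ¬ ((i : ℤ) + (m : ℤ) < (i : ℤ)) := by omega
    simp [hF, h2]
  have hMF : ∀ i j, j ≠ i → |M i j| + |F i j| = -A i j := by
    intro i j hj
    have hA0 : A i j ≤ 0 := hZ i j (Ne.symm hj)
    simp only [hMdef, Matrix.sub_apply, hT, hE, hF]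
    by_cases h3 : (i : ℤ) + (m : ℤ) < (j : ℤ)
    · have h1 : ¬ (|(i : ℤ) - (j : ℤ)| ≤ (m : ℤ)) := by
        rw [abs_le]; omega
      have h2 : ¬ ((j : ℤ) + (m : ℤ) < (i : ℤ)) := by omega
      simp only [h1, h2, h3, if_true, if_false, sub_zero, sub_self, abs_zero, zero_add]
      exact abs_of_nonneg (by linarith)
    · by_cases h1 : |(i : ℤ) - (j : ℤ)| ≤ (m : ℤ)
      · have h2 : ¬ ((j : ℤ) + (m : ℤ) < (i : ℤ)) := by
          have := abs_le.mp h1; omega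
        simp only [h1, h2, h3, if_true, if_false, sub_zero, abs_zero, add_zero]
        exact abs_of_nonpos hA0
      · have h2 : (j : ℤ) + (m : ℤ) < (i : ℤ) := by
          by_contra h2
          exact h1 (abs_le.mpr ⟨by omega, by omega⟩)
        simp only [h1, h2, h3, if_true, if_false, abs_zero, add_zero, zero_sub, neg_neg]
        exact abs_of_nonpos hA0
  -- the positive vector x with A x = 1
  set x : Fin n → ℝ := A⁻¹ *ᵥ (fun _ => (1 : ℝ)) with hxdef
  have hAxeq : A *ᵥ x = fun _ => (1 : ℝ) := by
    rw [hxdef, Matrix.mulVec_mulVec, Matrix.mul_nonsing_inv A hAdet, Matrix.one_mulVec]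
  have hAx : ∀ i, ∑ j, A i j * x j = 1 := by
    intro i
    have := congrFun hAxeq i
    simpa [Matrix.mulVec, dotProduct] using this
  have hx : ∀ i, 0 < x i := by
    intro i
    have hge : 0 ≤ x i := by
      rw [hxdef]
      simp only [Matrix.mulVec, dotProduct, mul_one]
      exact Finset.sum_nonneg fun j _ => hAinv i j
    rcases lt_or_eq_of_le hge with h | h
    · exact h
    · exfalso
      have hz : ∀ j ∈ Finset.univ, A⁻¹ i j * 1 = 0 := by
        rw [hxdef] at h
        simp only [Matrix.mulVec, dotProduct] at h
        exact (Finset.sum_eq_zero_iff_of_nonneg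
          (fun j _ => by simpa using hAinv i j)).mp h.symm
      have h11 : (A⁻¹ * A) i i = 1 := by
        rw [Matrix.nonsing_inv_mul A hAdet]; simp
      rw [Matrix.mul_apply] at h11
      have : ∑ j, A⁻¹ i j * A j i = 0 :=
        Finset.sum_eq_zero fun j _ => by
          have := hz j (Finset.mem_univ j); simp at this; simp [this]
      rw [this] at h11
      exact one_ne_zero h11.symm
  -- invertibility of M
  have hMunit : IsUnit M := by
    by_contra hMu
    have hdet : M.det = 0 := by
      by_contra hd
      exact hMu ((Matrix.isUnit_iff_isUnit_det M).mpr (isUnit_iff_ne_zero.mpr hd))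
    have hdetC : (M.map Complex.ofReal).det = 0 := by
      have hcoe : M.map Complex.ofReal = M.map (⇑Complex.ofRealHom) := rfl
      rw [hcoe]
      rw [show M.map (⇑Complex.ofRealHom) = Complex.ofRealHom.mapMatrix M from rfl]
      rw [← RingHom.map_det Complex.ofRealHom, hdet]
      simp
    obtain ⟨v, hv0, hv⟩ := Matrix.exists_mulVec_eq_zero_iff.mpr hdetC
    exact hv0 (ggs_core A M F x hx hAx hMd hFd hMF 0 (by simp) v
      (by rw [hv, zero_smul]))
  refine ⟨hMunit, ?_⟩
  intro lam v hv0 heig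
  by_contra habs
  push_neg at habs
  have hlam0 : lam ≠ 0 := by
    intro h; rw [h] at habs; simp at habs; linarith
  have hMdetu : IsUnit M.det := (Matrix.isUnit_iff_isUnit_det M).mp hMunit
  -- multiply eigen equation by M
  have hMMinv : M.map Complex.ofReal * (M⁻¹ * F).map Complex.ofReal = F.map Complex.ofReal := by
    have hcoe : ∀ (B : Matrix (Fin n) (Fin n) ℝ),
        B.map Complex.ofReal = B.map (⇑Complex.ofRealHom) := fun B => rfl
    rw [hcoe, hcoe, hcoe, ← Matrix.map_mul (f := Complex.ofRealHom), ← Matrix.mul_assoc,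
      Matrix.mul_nonsing_inv M hMdetu, Matrix.one_mul]
  have hkey : (F.map Complex.ofReal) *ᵥ v = lam • ((M.map Complex.ofReal) *ᵥ v) := by
    have := congrArg (fun w => (M.map Complex.ofReal) *ᵥ w) heig
    rw [Matrix.mulVec_mulVec, hMMinv, Matrix.mulVec_smul] at this
    exact this
  have hveq : (M.map Complex.ofReal) *ᵥ v = lam⁻¹ • ((F.map Complex.ofReal) *ᵥ v) := by
    rw [hkey, inv_smul_smul₀ hlam0]
  have hμle : ‖lam⁻¹‖ ≤ 1 := by
    rw [norm_inv]
    rw [inv_le_one_iff₀]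
    right; exact habs
  exact hv0 (ggs_core A M F x hx hAx hMd hFd hMF lam⁻¹ hμle v hveq)
end

section
/- Let A be an n×n real H-matrix, i.e. its comparison matrix M(A), defined by M(A)_{ii} = |a_{ii}| and M(A)_{ij} = −|a_{ij}| for i ≠ j, is a nonsingular M-matrix (invertible with entrywise nonnegative inverse). Fix m < n and let A = T_m − E_m − F_m be the banded decomposition. Then T_m is invertible and every complex eigenvalue λ of T_m⁻¹(E_m + F_m) satisfies |λ| < 1 (the generalized Jacobi method converges for every initial guess). -/
open Matrix Finset

lemma sdd_mulVec_eq_zero_s4 {n : ℕ} (hn : 0 < n) (B : Matrix (Fin n) (Fin n) ℂ)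
    (u : Fin n → ℝ) (hu : ∀ i, 0 < u i)
    (hdom : ∀ i, ∑ j ∈ Finset.univ.erase i, ‖B i j‖ * u j <
      ‖B i i‖ * u i)
    (v : Fin n → ℂ) (hv : B.mulVec v = 0) : v = 0 := by
  by_contra hv0
  obtain ⟨i, -, hi⟩ := Finset.exists_max_image Finset.univ
    (fun j => ‖v j‖ / u j) ⟨⟨0, hn⟩, Finset.mem_univ _⟩
  set c := ‖v i‖ / u i with hc
  have hcpos : 0 < c := by
    obtain ⟨k, hk⟩ := Function.ne_iff.mp hv0
    have hk' : 0 < ‖v k‖ / u k := by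
      apply div_pos _ (hu k)
      simpa using hk
    exact lt_of_lt_of_le hk' (hi k (Finset.mem_univ k))
  have hvle : ∀ j, ‖v j‖ ≤ c * u j := by
    intro j
    have h := hi j (Finset.mem_univ j)
    calc ‖v j‖ = ‖v j‖ / u j * u j :=
          (div_mul_cancel₀ _ (hu j).ne').symm
      _ ≤ c * u j := by
          apply mul_le_mul_of_nonneg_right h (hu j).le
  have hvi : c * u i = ‖v i‖ := div_mul_cancel₀ _ (hu i).ne'
  have h0 : ∑ j, B i j * v j = 0 := congrFun hv i
  have h1 : B i i * v i = -∑ j ∈ Finset.univ.erase i, B i j * v j := by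
    have h2 := Finset.add_sum_erase Finset.univ (fun j => B i j * v j) (Finset.mem_univ i)
    beta_reduce at h2
    exact eq_neg_of_add_eq_zero_left (h2.trans h0)
  have : ‖B i i‖ * ‖v i‖ < ‖B i i‖ * ‖v i‖ := by
    calc ‖B i i‖ * ‖v i‖
        = ‖B i i * v i‖ := (norm_mul _ _).symm
      _ = ‖∑ j ∈ Finset.univ.erase i, B i j * v j‖ := by rw [h1, norm_neg]
      _ ≤ ∑ j ∈ Finset.univ.erase i, ‖B i j * v j‖ := by
          exact norm_sum_le _ _
      _ ≤ ∑ j ∈ Finset.univ.erase i, ‖B i j‖ * (c * u j) := by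
          apply Finset.sum_le_sum
          intro j _
          rw [norm_mul]
          exact mul_le_mul_of_nonneg_left (hvle j) (norm_nonneg _)
      _ = c * ∑ j ∈ Finset.univ.erase i, ‖B i j‖ * u j := by
          rw [Finset.mul_sum]; apply Finset.sum_congr rfl; intro j _; ring
      _ < c * (‖B i i‖ * u i) := by
          exact mul_lt_mul_of_pos_left (hdom i) hcpos
      _ = ‖B i i‖ * ‖v i‖ := by rw [← hvi]; ring
  exact lt_irrefl _ this

lemma map_mul_ofReal {n : ℕ} (X Y : Matrix (Fin n) (Fin n) ℝ) :
    (X * Y).map Complex.ofReal = X.map Complex.ofReal * Y.map Complex.ofReal := by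
  ext i j
  simp [Matrix.mul_apply, Matrix.map_apply]

/-- Generalized Jacobi converges for H-matrices. -/
theorem gj_converges_of_Hmatrix (n m : ℕ) (hm : m < n)
    (A MA T E F : Matrix (Fin n) (Fin n) ℝ)
    (hMA : ∀ i j, MA i j = if i = j then |A i i| else -|A i j|)
    (hMAunit : IsUnit MA)
    (hMAinv : ∀ i j, 0 ≤ MA⁻¹ i j)
(hT : ∀ i j, T i j = if |(i : ℤ) - (j : ℤ)| ≤ (m : ℤ) then A i j else 0)
    (hE : ∀ i j, E i j = if (j : ℤ) + (m : ℤ) < (i : ℤ) then -A i j else 0)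
    (hF : ∀ i j, F i j = if (i : ℤ) + (m : ℤ) < (j : ℤ) then -A i j else 0) :
    IsUnit T ∧
      ∀ (lam : ℂ) (v : Fin n → ℂ), v ≠ 0 →
        ((T⁻¹ * (E + F)).map (Complex.ofReal)).mulVec v = lam • v →
        ‖lam‖ < 1 := by
  have hn : 0 < n := lt_of_le_of_lt (Nat.zero_le m) hm
  have hMAd : IsUnit MA.det := (Matrix.isUnit_iff_isUnit_det MA).mp hMAunit
  have hinv1 : MA * MA⁻¹ = 1 := Matrix.mul_nonsing_inv MA hMAd
  have hinv2 : MA⁻¹ * MA = 1 := Matrix.nonsing_inv_mul MA hMAd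
  set u : Fin n → ℝ := MA⁻¹.mulVec (fun _ => 1) with hu
  have hupos : ∀ i, 0 < u i := by
    intro i
    have hrow : ∃ j, MA⁻¹ i j ≠ 0 := by
      by_contra h
      push_neg at h
      have h0 : (MA⁻¹ * MA) i i = 0 := by
        rw [Matrix.mul_apply]
        exact Finset.sum_eq_zero fun j _ => by rw [h j, zero_mul]
      rw [hinv2] at h0
      simp at h0
    obtain ⟨j, hj⟩ := hrow
    have hui : u i = ∑ k, MA⁻¹ i k := by
      simp [hu, Matrix.mulVec, dotProduct]
    rw [hui]
    exact Finset.sum_pos' (fun k _ => hMAinv i k)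
      ⟨j, Finset.mem_univ j, lt_of_le_of_ne (hMAinv i j) (Ne.symm hj)⟩
  have hAdom : ∀ i, ∑ j ∈ Finset.univ.erase i, |A i j| * u j < |A i i| * u i := by
    intro i
    have h1 : MA.mulVec u i = 1 := by
      rw [hu, Matrix.mulVec_mulVec, hinv1, Matrix.one_mulVec]
    have h1' : ∑ j, MA i j * u j = 1 := h1
    have h2 := Finset.add_sum_erase Finset.univ (fun j => MA i j * u j) (Finset.mem_univ i)
    beta_reduce at h2
    have h3 : ∑ j ∈ Finset.univ.erase i, MA i j * u j
        = -∑ j ∈ Finset.univ.erase i, |A i j| * u j := by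
      rw [← Finset.sum_neg_distrib]
      apply Finset.sum_congr rfl
      intro j hj
      rw [hMA i j, if_neg (Ne.symm (Finset.ne_of_mem_erase hj))]
      ring
    have h4 : MA i i = |A i i| := by rw [hMA]; simp
    rw [h4, h3] at h2
    linarith [h2, h1']
  -- T is invertible
  have hTdiag : ∀ i : Fin n, T i i = A i i := by
    intro i
    rw [hT]
    simp
  have hToff : ∀ i j, |T i j| ≤ |A i j| := by
    intro i j
    rw [hT]
    split_ifs
    · exact le_refl _
    · simp [abs_nonneg]
  have habs : ∀ (x : ℝ), ‖(x : ℂ)‖ = |x| := fun x => by rw [Complex.norm_real, Real.norm_eq_abs]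
  have hTdom : ∀ i, ∑ j ∈ Finset.univ.erase i,
      ‖(T.map Complex.ofReal) i j‖ * u j <
      ‖(T.map Complex.ofReal) i i‖ * u i := by
    intro i
    calc ∑ j ∈ Finset.univ.erase i, ‖(T.map Complex.ofReal) i j‖ * u j
        ≤ ∑ j ∈ Finset.univ.erase i, |A i j| * u j := by
          apply Finset.sum_le_sum
          intro j _
          rw [Matrix.map_apply, habs]
          exact mul_le_mul_of_nonneg_right (hToff i j) (hupos j).le
      _ < |A i i| * u i := hAdom i
      _ = ‖(T.map Complex.ofReal) i i‖ * u i := by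
          rw [Matrix.map_apply, habs, hTdiag]
  have hTunit : IsUnit T := by
    rw [Matrix.isUnit_iff_isUnit_det, isUnit_iff_ne_zero]
    intro hdet
    have hdetC : (T.map Complex.ofReal).det = 0 := by
      have hd : (T.map Complex.ofReal).det = (T.det : ℂ) :=
        (RingHom.map_det Complex.ofRealHom T).symm
      rw [hd, hdet, Complex.ofReal_zero]
    obtain ⟨v, hv0, hv⟩ := Matrix.exists_mulVec_eq_zero_iff.mpr hdetC
    exact hv0 (sdd_mulVec_eq_zero_s4 hn _ u hupos hTdom v hv)
  refine ⟨hTunit, ?_⟩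
  intro lam v hv0 heig
  by_contra hlam
  push_neg at hlam
  have hlampos : (0:ℝ) < ‖lam‖ := lt_of_lt_of_le one_pos hlam
  have hEF : ∀ i j, E i j + F i j =
      if |(i : ℤ) - (j : ℤ)| ≤ (m : ℤ) then 0 else -A i j := by
    intro i j
    rw [hE, hF]
    by_cases h3 : |(i : ℤ) - (j : ℤ)| ≤ (m : ℤ)
    · have h3' := abs_sub_le_iff.mp h3
      rw [if_pos h3, if_neg (by omega : ¬((j:ℤ) + (m:ℤ) < (i:ℤ))),
        if_neg (by omega : ¬((i:ℤ) + (m:ℤ) < (j:ℤ))), add_zero]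
    · have h3' : ¬(((i:ℤ) - (j:ℤ) ≤ (m:ℤ)) ∧ ((j:ℤ) - (i:ℤ) ≤ (m:ℤ))) := by
        rwa [abs_sub_le_iff] at h3
      rw [if_neg h3]
      rcases not_and_or.mp h3' with h | h
      · rw [if_pos (by omega : (j:ℤ) + (m:ℤ) < (i:ℤ)),
          if_neg (by omega : ¬((i:ℤ) + (m:ℤ) < (j:ℤ))), add_zero]
      · rw [if_neg (by omega : ¬((j:ℤ) + (m:ℤ) < (i:ℤ))),
          if_pos (by omega : (i:ℤ) + (m:ℤ) < (j:ℤ)), zero_add]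
  set B : Matrix (Fin n) (Fin n) ℂ :=
    lam • T.map Complex.ofReal - (E + F).map Complex.ofReal with hB
  have hBent : ∀ i j, B i j = lam * (T i j : ℂ) - ((E i j + F i j : ℝ) : ℂ) := by
    intro i j
    rw [hB]
    simp [Matrix.sub_apply, Matrix.map_apply, Matrix.add_apply]
  have hBv : B.mulVec v = 0 := by
    have hTT : T * (T⁻¹ * (E + F)) = E + F := by
      rw [← mul_assoc, Matrix.mul_nonsing_inv T ((Matrix.isUnit_iff_isUnit_det T).mp hTunit),
        one_mul]
    have h4 : ((E + F).map Complex.ofReal).mulVec v = lam • (T.map Complex.ofReal).mulVec v := by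
      calc ((E + F).map Complex.ofReal).mulVec v
          = ((T * (T⁻¹ * (E + F))).map Complex.ofReal).mulVec v := by rw [hTT]
        _ = ((T.map Complex.ofReal) * ((T⁻¹ * (E + F)).map Complex.ofReal)).mulVec v := by
            rw [map_mul_ofReal]
        _ = (T.map Complex.ofReal).mulVec (((T⁻¹ * (E + F)).map Complex.ofReal).mulVec v) :=
            (Matrix.mulVec_mulVec _ _ _).symm
        _ = (T.map Complex.ofReal).mulVec (lam • v) := by rw [heig]
        _ = lam • (T.map Complex.ofReal).mulVec v := Matrix.mulVec_smul _ _ _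
    rw [hB, Matrix.sub_mulVec, Matrix.smul_mulVec, h4, sub_self]
  have hBdiag : ∀ i, ‖B i i‖ = ‖lam‖ * |A i i| := by
    intro i
    have hEFii : E i i + F i i = 0 := by
      rw [hEF]
      simp
    rw [hBent, hEFii, hTdiag]
    simp [_root_.map_mul, habs]
  have hBoff : ∀ i j, j ≠ i → ‖B i j‖ ≤ ‖lam‖ * |A i j| := by
    intro i j _
    by_cases hband : |(i : ℤ) - (j : ℤ)| ≤ (m : ℤ)
    · have hEFij : E i j + F i j = 0 := by rw [hEF, if_pos hband]
      have hTij : T i j = A i j := by rw [hT, if_pos hband]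
      rw [hBent, hEFij, hTij]
      simp [_root_.map_mul, habs]
    · have hEFij : E i j + F i j = -A i j := by rw [hEF, if_neg hband]
      have hTij : T i j = 0 := by rw [hT, if_neg hband]
      rw [hBent, hEFij, hTij]
      have : ‖lam * ((0:ℝ) : ℂ) - ((-A i j : ℝ) : ℂ)‖ = |A i j| := by
        push_cast
        simp [habs]
      rw [this]
      exact le_mul_of_one_le_left (abs_nonneg _) hlam
  have hBdom : ∀ i, ∑ j ∈ Finset.univ.erase i, ‖B i j‖ * u j <
      ‖B i i‖ * u i := by
    intro i
    calc ∑ j ∈ Finset.univ.erase i, ‖B i j‖ * u j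
        ≤ ∑ j ∈ Finset.univ.erase i, ‖lam‖ * |A i j| * u j := by
          apply Finset.sum_le_sum
          intro j hj
          exact mul_le_mul_of_nonneg_right
            (hBoff i j (Finset.ne_of_mem_erase hj)) (hupos j).le
      _ = ‖lam‖ * ∑ j ∈ Finset.univ.erase i, |A i j| * u j := by
          rw [Finset.mul_sum]
          apply Finset.sum_congr rfl
          intro j _
          ring
      _ < ‖lam‖ * (|A i i| * u i) := mul_lt_mul_of_pos_left (hAdom i) hlampos
      _ = ‖B i i‖ * u i := by rw [hBdiag]; ring
  exact hv0 (sdd_mulVec_eq_zero_s4 hn B u hupos hBdom v hBv)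
end

section
/- Let A be an n×n nonsingular M-matrix, fix m < n with banded decomposition A = T_m − E_m − F_m (so T_m is invertible), and let r ≥ 0 be such that every complex eigenvalue of the generalized Jacobi matrix T_m⁻¹(E_m + F_m) has modulus ≤ r. Suppose 0 < ω < 2/(1 + r) and that every complex eigenvalue of T_m⁻¹ E_m has modulus < 1/ω. Then T_m − ω E_m is invertible and every complex eigenvalue λ of the GSOR iteration matrix (T_m − ω E_m)⁻¹[(1−ω)T_m + ω F_m] satisfies |λ| < 1 (GSOR converges for every initial guess). -/
open Matrix Finset

open Filter Topology

namespace GSORAux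

variable {n : ℕ}

lemma pow_entries_nonneg (M : Matrix (Fin n) (Fin n) ℝ) (h : ∀ i j, 0 ≤ M i j) (k : ℕ) :
    ∀ i j, 0 ≤ (M ^ k) i j := by
  induction k with
  | zero => intro i j; rw [pow_zero]; by_cases hij : i = j <;> simp [Matrix.one_apply, hij]
  | succ k ih =>
    intro i j
    rw [pow_succ, Matrix.mul_apply]
    exact Finset.sum_nonneg fun l _ => mul_nonneg (ih i l) (h l j)

lemma abs_pow_le (B : Matrix (Fin n) (Fin n) ℂ) (M : Matrix (Fin n) (Fin n) ℝ)
    (h : ∀ i j, ‖B i j‖ ≤ M i j) (k : ℕ) :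
    ∀ i j, ‖(B ^ k) i j‖ ≤ (M ^ k) i j := by
  induction k with
  | zero =>
    intro i j
    rw [pow_zero, pow_zero]
    by_cases hij : i = j <;> simp [Matrix.one_apply, hij]
  | succ k ih =>
    intro i j
    rw [pow_succ, pow_succ, Matrix.mul_apply, Matrix.mul_apply]
    calc ‖∑ l, (B ^ k) i l * B l j‖ ≤ ∑ l, ‖(B ^ k) i l * B l j‖ :=
          norm_sum_le _ _
    _ ≤ ∑ l, (M ^ k) i l * M l j := by
        refine Finset.sum_le_sum fun l _ => ?_
        rw [norm_mul]
        exact mul_le_mul (ih i l) (h l j) (norm_nonneg _)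
          ((norm_nonneg _).trans (ih i l))

lemma map_mul' (X Y : Matrix (Fin n) (Fin n) ℝ) :
    (X * Y).map Complex.ofReal = X.map Complex.ofReal * Y.map Complex.ofReal := by
  have h := Matrix.map_mul (L := X) (M := Y) (f := Complex.ofRealHom)
  convert h using 2 <;> rfl

lemma map_one' : ((1 : Matrix (Fin n) (Fin n) ℝ)).map Complex.ofReal = 1 := by
  ext i j
  by_cases hij : i = j <;> simp [Matrix.map_apply, Matrix.one_apply, hij]

lemma map_pow' (X : Matrix (Fin n) (Fin n) ℝ) (k : ℕ) :
    (X.map Complex.ofReal) ^ k = (X ^ k).map Complex.ofReal := by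
  induction k with
  | zero => rw [pow_zero, pow_zero, map_one']
  | succ k ih => rw [pow_succ, pow_succ, ih, map_mul']

lemma mulVec_mono (J : Matrix (Fin n) (Fin n) ℝ) (hJ : ∀ i j, 0 ≤ J i j)
    (u w : Fin n → ℝ) (h : ∀ i, u i ≤ w i) : ∀ i, J.mulVec u i ≤ J.mulVec w i := by
  intro i
  simp only [Matrix.mulVec, dotProduct]
  exact Finset.sum_le_sum fun j _ => mul_le_mul_of_nonneg_left (h j) (hJ i j)

lemma zmat [Nonempty (Fin n)] (T : Matrix (Fin n) (Fin n) ℝ) (x : Fin n → ℝ)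
    (hZ : ∀ i j, i ≠ j → T i j ≤ 0) (hx : ∀ i, 0 < x i) (hTx : ∀ i, 0 < T.mulVec x i) :
    IsUnit T ∧ ∀ i j, 0 ≤ T⁻¹ i j := by
  classical
  -- diagonal entries are positive
  have hdiag : ∀ i, 0 < T i i := by
    intro i
    have hsum : T.mulVec x i = T i i * x i + ∑ j ∈ univ.erase i, T i j * x j := by
      simp only [Matrix.mulVec, dotProduct]
      rw [← Finset.add_sum_erase _ _ (Finset.mem_univ i)]
    have hle : ∑ j ∈ univ.erase i, T i j * x j ≤ 0 :=
      Finset.sum_nonpos fun j hj =>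
        mul_nonpos_of_nonpos_of_nonneg (hZ i j (Ne.symm (Finset.ne_of_mem_erase hj))) (hx j).le
    have hpos : 0 < T i i * x i := by
      have := hTx i
      rw [hsum] at this
      linarith
    rcases mul_pos_iff.mp hpos with ⟨h, _⟩ | ⟨_, h⟩
    · exact h
    · exact absurd h (not_lt.mpr (hx i).le)
  set J : Matrix (Fin n) (Fin n) ℝ :=
    Matrix.of (fun i j => if i = j then 0 else -T i j / T i i) with hJdef
  have hJ0 : ∀ i j, 0 ≤ J i j := by
    intro i j
    simp only [hJdef, Matrix.of_apply]
    split
    · exact le_refl 0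
    · exact div_nonneg (neg_nonneg.mpr (hZ i j (by assumption))) (hdiag i).le
  have hTD : T = Matrix.diagonal (fun i => T i i) * (1 - J) := by
    ext i j
    rw [Matrix.diagonal_mul]
    by_cases hij : i = j
    · subst hij; simp [hJdef, Matrix.one_apply]
    · simp only [Matrix.sub_apply, Matrix.one_apply_ne hij, hJdef, Matrix.of_apply, if_neg hij]
      field_simp
      rw [zero_sub, neg_neg, mul_div_assoc', mul_div_cancel_left₀ _ (hdiag i).ne']
  -- J.mulVec x < x
  have hJx : ∀ i, J.mulVec x i < x i := by
    intro i
    have h1 : T.mulVec x i = T i i * (x i - J.mulVec x i) := by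
      conv_lhs => rw [hTD]
      rw [← Matrix.mulVec_mulVec, Matrix.mulVec_diagonal]
      rw [Matrix.sub_mulVec, Matrix.one_mulVec]
      simp [mul_sub]
    have h2 : 0 < T i i * (x i - J.mulVec x i) := h1 ▸ hTx i
    nlinarith [hdiag i, h2]
  have hJx0 : ∀ i, 0 ≤ J.mulVec x i := fun i => by
    simp only [Matrix.mulVec, dotProduct]
    exact Finset.sum_nonneg fun j _ => mul_nonneg (hJ0 i j) (hx j).le
  set θ : ℝ := univ.sup' univ_nonempty (fun i => J.mulVec x i / x i) with hθdef
  have hθ1 : θ < 1 := by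
    rw [hθdef, Finset.sup'_lt_iff]
    intro i _
    rw [div_lt_one (hx i)]
    exact hJx i
  have hθ0 : 0 ≤ θ := by
    obtain ⟨i⟩ := ‹Nonempty (Fin n)›
    exact le_trans (div_nonneg (hJx0 i) (hx i).le)
      (Finset.le_sup' (f := fun i => J.mulVec x i / x i) (Finset.mem_univ i))
  have hθx : ∀ i, J.mulVec x i ≤ θ * x i := by
    intro i
    have := Finset.le_sup' (f := fun i => J.mulVec x i / x i) (s := univ) (Finset.mem_univ i)
    calc J.mulVec x i = (J.mulVec x i / x i) * x i := (div_mul_cancel₀ _ (hx i).ne').symm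
    _ ≤ θ * x i := mul_le_mul_of_nonneg_right this (hx i).le
  have hJk0 : ∀ k i j, 0 ≤ (J ^ k) i j := fun k => pow_entries_nonneg J hJ0 k
  have hpow : ∀ k i, (J ^ k).mulVec x i ≤ θ ^ k * x i := by
    intro k
    induction k with
    | zero => intro i; rw [pow_zero, pow_zero, Matrix.one_mulVec, one_mul]
    | succ k ih =>
      intro i
      have h1 : (J ^ (k+1)).mulVec x = J.mulVec ((J ^ k).mulVec x) := by
        rw [Matrix.mulVec_mulVec, ← pow_succ']
      rw [h1]
      calc J.mulVec ((J ^ k).mulVec x) i ≤ J.mulVec (fun j => θ ^ k * x j) i :=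
            mulVec_mono J hJ0 _ _ ih i
      _ = θ ^ k * J.mulVec x i := by
          simp only [Matrix.mulVec, dotProduct, Finset.mul_sum]
          exact Finset.sum_congr rfl fun j _ => by ring
      _ ≤ θ ^ k * (θ * x i) := mul_le_mul_of_nonneg_left (hθx i) (pow_nonneg hθ0 k)
      _ = θ ^ (k+1) * x i := by ring
  -- 1 - J is invertible
  have hunit1J : IsUnit (1 - J) := by
    rw [Matrix.isUnit_iff_isUnit_det, isUnit_iff_ne_zero]
    intro hdet
    obtain ⟨w, hw0, hweq⟩ := Matrix.exists_mulVec_eq_zero_iff.mpr hdet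
    have hwJ : ∀ i, w i = J.mulVec w i := by
      intro i
      have := congr_fun hweq i
      rw [Matrix.sub_mulVec, Matrix.one_mulVec] at this
      have : w i - J.mulVec w i = 0 := this
      linarith
    set c : ℝ := univ.sup' univ_nonempty (fun i => |w i| / x i) with hcdef
    obtain ⟨i₀, -, hi₀⟩ := Finset.exists_mem_eq_sup' univ_nonempty (fun i => |w i| / x i)
    have hcx : ∀ i, |w i| ≤ c * x i := by
      intro i
      have := Finset.le_sup' (f := fun i => |w i| / x i) (s := univ) (Finset.mem_univ i)
      calc |w i| = (|w i| / x i) * x i := (div_mul_cancel₀ _ (hx i).ne').symm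
      _ ≤ c * x i := mul_le_mul_of_nonneg_right this (hx i).le
    have hc0 : 0 < c := by
      obtain ⟨j, hj⟩ := Function.ne_iff.mp hw0
      have h1 : 0 < |w j| / x j := div_pos (abs_pos.mpr hj) (hx j)
      exact lt_of_lt_of_le h1 (Finset.le_sup' (f := fun i => |w i| / x i) (Finset.mem_univ j))
    have hkey : c * x i₀ ≤ c * (θ * x i₀) := by
      have h1 : |w i₀| = c * x i₀ := by
        rw [hcdef, hi₀]; exact (div_mul_cancel₀ _ (hx i₀).ne').symm
      have h2 : |w i₀| ≤ ∑ j, J i₀ j * |w j| := by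
        rw [hwJ i₀]
        simp only [Matrix.mulVec, dotProduct]
        refine (Finset.abs_sum_le_sum_abs _ _).trans ?_
        refine Finset.sum_le_sum fun j _ => ?_
        rw [abs_mul, abs_of_nonneg (hJ0 i₀ j)]
      have h3 : ∑ j, J i₀ j * |w j| ≤ ∑ j, J i₀ j * (c * x j) :=
        Finset.sum_le_sum fun j _ => mul_le_mul_of_nonneg_left (hcx j) (hJ0 i₀ j)
      have h4 : ∑ j, J i₀ j * (c * x j) = c * J.mulVec x i₀ := by
        simp only [Matrix.mulVec, dotProduct, Finset.mul_sum]
        exact Finset.sum_congr rfl fun j _ => by ring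
      have h5 : c * J.mulVec x i₀ ≤ c * (θ * x i₀) :=
        mul_le_mul_of_nonneg_left (hθx i₀) hc0.le
      linarith
    have : (1:ℝ) ≤ θ := by
      have hpos : 0 < c * x i₀ := mul_pos hc0 (hx i₀)
      nlinarith
    linarith
  have hDunit : IsUnit (Matrix.diagonal (fun i => T i i)) := by
    rw [Matrix.isUnit_iff_isUnit_det, Matrix.det_diagonal, isUnit_iff_ne_zero]
    exact Finset.prod_ne_zero_iff.mpr fun i _ => (hdiag i).ne'
  have hTunit : IsUnit T := hTD ▸ hDunit.mul hunit1J
  refine ⟨hTunit, ?_⟩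
  -- nonnegativity of T⁻¹
  have hTinv : T⁻¹ = (1 - J)⁻¹ * (Matrix.diagonal (fun i => T i i))⁻¹ := by
    conv_lhs => rw [hTD]
    rw [Matrix.mul_inv_rev]
  have hRid : ∀ k, (1 - J)⁻¹ = (∑ j ∈ Finset.range k, J ^ j) + (1 - J)⁻¹ * J ^ k := by
    intro k
    have hgeo : (1 - J) * (∑ j ∈ Finset.range k, J ^ j) = 1 - J ^ k := by
      have h1 := mul_geom_sum (x := J) k
      calc (1 - J) * (∑ j ∈ Finset.range k, J ^ j)
          = -((J - 1) * ∑ j ∈ Finset.range k, J ^ j) := by rw [← neg_mul, neg_sub]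
      _ = -(J ^ k - 1) := by rw [h1]
      _ = 1 - J ^ k := by rw [neg_sub]
    have h2 : (1 - J)⁻¹ * ((1 - J) * (∑ j ∈ Finset.range k, J ^ j)) =
        (1 - J)⁻¹ * (1 - J ^ k) := by rw [hgeo]
    rw [← Matrix.mul_assoc, Matrix.nonsing_inv_mul _ ((Matrix.isUnit_iff_isUnit_det _).mp hunit1J),
      Matrix.one_mul, Matrix.mul_sub, Matrix.mul_one] at h2
    rw [h2]
    abel
  have hJkbd : ∀ (k : ℕ) (l b : Fin n), (J ^ k) l b ≤ θ ^ k * x l / x b := by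
    intro k l b
    have h1 : (J ^ k) l b * x b ≤ θ ^ k * x l := by
      refine le_trans ?_ (hpow k l)
      simp only [Matrix.mulVec, dotProduct]
      exact Finset.single_le_sum (f := fun j => (J ^ k) l j * x j)
        (fun j _ => mul_nonneg (hJk0 k l j) (hx j).le) (Finset.mem_univ b)
    rw [le_div_iff₀ (hx b)]
    exact h1
  intro i j
  rw [hTinv]
  have hDinv : (Matrix.diagonal (fun i => T i i))⁻¹ = Matrix.diagonal (fun i => (T i i)⁻¹) := by
    apply Matrix.inv_eq_right_inv
    have h9 : (fun i => T i i * (T i i)⁻¹) = fun _ : Fin n => (1:ℝ) :=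
      funext fun i => mul_inv_cancel₀ (hdiag i).ne'
    rw [Matrix.diagonal_mul_diagonal, h9, Matrix.diagonal_one]
  rw [hDinv, Matrix.mul_diagonal]
  refine mul_nonneg ?_ (inv_nonneg.mpr (hdiag j).le)
  set R := (1 - J)⁻¹ with hRdef
  set K : ℝ := ∑ l, |R i l| * x l / x j with hKdef
  have hK0 : 0 ≤ K :=
    Finset.sum_nonneg fun l _ => div_nonneg (mul_nonneg (abs_nonneg _) (hx l).le) (hx j).le
  have hlb : ∀ k : ℕ, -(K * θ ^ k) ≤ R i j := by
    intro k
    have hentry : R i j = (∑ l ∈ Finset.range k, J ^ l) i j + (R * J ^ k) i j := by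
      conv_lhs => rw [hRid k]
      rw [Matrix.add_apply]
    have hS0 : 0 ≤ (∑ l ∈ Finset.range k, J ^ l) i j := by
      rw [Matrix.sum_apply]
      exact Finset.sum_nonneg fun l _ => hJk0 l i j
    have habs : |(R * J ^ k) i j| ≤ K * θ ^ k := by
      rw [Matrix.mul_apply]
      refine (Finset.abs_sum_le_sum_abs _ _).trans ?_
      calc ∑ l, |R i l * (J ^ k) l j| ≤ ∑ l, |R i l| * (θ ^ k * x l / x j) := by
            refine Finset.sum_le_sum fun l _ => ?_
            rw [abs_mul, abs_of_nonneg (hJk0 k l j)]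
            exact mul_le_mul_of_nonneg_left (hJkbd k l j) (abs_nonneg _)
      _ = K * θ ^ k := by
            rw [hKdef, Finset.sum_mul]
            exact Finset.sum_congr rfl fun l _ => by ring
    have h6 := (abs_le.mp habs).1
    linarith
  have htend : Tendsto (fun k : ℕ => -(K * θ ^ k)) atTop (𝓝 0) := by
    have h7 := (tendsto_pow_atTop_nhds_zero_of_lt_one hθ0 hθ1).const_mul K
    rw [mul_zero] at h7
    simpa using h7.neg
  exact le_of_tendsto htend (Filter.Eventually.of_forall hlb)


end GSORAux


/-- Generalized SOR converges for nonsingular M-matrices when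
0 < ω < 2/(1 + ρ(H_GJ)) and ρ(T_m⁻¹E_m) < 1/ω. -/
theorem gsor_converges_of_Mmatrix_large_omega (n m : ℕ) (hm : m < n)
    (A T E F : Matrix (Fin n) (Fin n) ℝ) (ω r : ℝ)
    (hZ : ∀ i j, i ≠ j → A i j ≤ 0)
    (hA : IsUnit A)
    (hAinv : ∀ i j, 0 ≤ A⁻¹ i j)
(hT : ∀ i j, T i j = if |(i : ℤ) - (j : ℤ)| ≤ (m : ℤ) then A i j else 0)
    (hE : ∀ i j, E i j = if (j : ℤ) + (m : ℤ) < (i : ℤ) then -A i j else 0)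
    (hF : ∀ i j, F i j = if (i : ℤ) + (m : ℤ) < (j : ℤ) then -A i j else 0)
    (hr : 0 ≤ r)
    (hGJ : ∀ (lam : ℂ) (v : Fin n → ℂ), v ≠ 0 →
      ((T⁻¹ * (E + F)).map (Complex.ofReal)).mulVec v = lam • v →
      ‖lam‖ ≤ r)
    (hω0 : 0 < ω) (hω2 : ω < 2 / (1 + r))
    (hTE : ∀ (lam : ℂ) (v : Fin n → ℂ), v ≠ 0 →
      ((T⁻¹ * E).map (Complex.ofReal)).mulVec v = lam • v →
      ‖lam‖ < 1 / ω) :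
    IsUnit (T - ω • E) ∧
      ∀ (lam : ℂ) (v : Fin n → ℂ), v ≠ 0 →
        (((T - ω • E)⁻¹ * ((1 - ω) • T + ω • F)).map (Complex.ofReal)).mulVec v = lam • v →
        ‖lam‖ < 1 := by
  classical
  have hn : 0 < n := lt_of_le_of_lt (Nat.zero_le m) hm
  haveI : Nonempty (Fin n) := Fin.pos_iff_nonempty.mp hn
  have hAdet : IsUnit A.det := (Matrix.isUnit_iff_isUnit_det A).mp hA
  have hE0 : ∀ i j, 0 ≤ E i j := by
    intro i j
    rw [hE i j]
    split
    · rename_i h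
      refine neg_nonneg.mpr (hZ i j ?_)
      intro hij
      rw [hij] at h
      omega
    · exact le_refl 0
  have hF0 : ∀ i j, 0 ≤ F i j := by
    intro i j
    rw [hF i j]
    split
    · rename_i h
      refine neg_nonneg.mpr (hZ i j ?_)
      intro hij
      rw [hij] at h
      omega
    · exact le_refl 0
  have hTEF : T = A + E + F := by
    ext i j
    simp only [Matrix.add_apply, hT i j, hE i j, hF i j]
    by_cases h1 : |(i:ℤ) - (j:ℤ)| ≤ (m:ℤ)
    · have h1' := abs_le.mp h1
      rw [if_pos h1, if_neg (by omega), if_neg (by omega)]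
      ring
    · rw [if_neg h1]
      rw [abs_le, not_and_or, not_le, not_le] at h1
      rcases h1 with h2 | h2
      · rw [if_neg (by omega), if_pos (by omega)]; ring
      · rw [if_pos (by omega), if_neg (by omega)]; ring
  have hZT : ∀ i j, i ≠ j → T i j ≤ 0 := by
    intro i j hij
    rw [hT i j]
    split
    · exact hZ i j hij
    · exact le_refl 0
  set x : Fin n → ℝ := A⁻¹.mulVec (fun _ => 1) with hxdef
  have hx : ∀ i, 0 < x i := by
    intro i
    have hxi : x i = ∑ j, A⁻¹ i j := by
      simp [hxdef, Matrix.mulVec, dotProduct]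
    rw [hxi]
    refine Finset.sum_pos' (fun j _ => hAinv i j) ?_
    by_contra hcon
    push_neg at hcon
    have hrow : ∀ j, A⁻¹ i j = 0 := fun j => le_antisymm (hcon j (Finset.mem_univ j)) (hAinv i j)
    have hdetz : A⁻¹.det = 0 := Matrix.det_eq_zero_of_row_eq_zero i hrow
    have hdi : A⁻¹.det = Ring.inverse A.det := Matrix.det_nonsing_inv (A := A)
    rw [hdi, Ring.inverse_eq_inv] at hdetz
    exact (isUnit_iff_ne_zero.mp hAdet) (inv_eq_zero.mp hdetz)
  have hAx : A.mulVec x = fun _ => (1:ℝ) := by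
    rw [hxdef, Matrix.mulVec_mulVec, Matrix.mul_nonsing_inv _ hAdet, Matrix.one_mulVec]
  have hEx0 : ∀ (X : Matrix (Fin n) (Fin n) ℝ), (∀ a b, 0 ≤ X a b) → ∀ (u : Fin n → ℝ),
      (∀ i, 0 ≤ u i) → ∀ i, 0 ≤ X.mulVec u i := by
    intro X hX u hu i
    simp only [Matrix.mulVec, dotProduct]
    exact Finset.sum_nonneg fun j _ => mul_nonneg (hX i j) (hu j)
  have hTx : ∀ i, 0 < T.mulVec x i := by
    intro i
    rw [hTEF, Matrix.add_mulVec, Matrix.add_mulVec, hAx]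
    have h1 := hEx0 E hE0 x (fun i => (hx i).le) i
    have h2 := hEx0 F hF0 x (fun i => (hx i).le) i
    simp only [Pi.add_apply]
    linarith
  obtain ⟨hTunit, hTinv0⟩ := GSORAux.zmat T x hZT hx hTx
  have hTdet : IsUnit T.det := (Matrix.isUnit_iff_isUnit_det T).mp hTunit
  set Gr : Matrix (Fin n) (Fin n) ℝ := T⁻¹ * (E + F) with hGrdef
  have hGr0 : ∀ i j, 0 ≤ Gr i j := by
    intro i j
    rw [hGrdef, Matrix.mul_apply]
    exact Finset.sum_nonneg fun l _ => mul_nonneg (hTinv0 i l)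
      (by rw [Matrix.add_apply]; exact add_nonneg (hE0 l j) (hF0 l j))
  set P : Matrix (Fin n) (Fin n) ℝ := A⁻¹ * (E + F) with hPdef
  have hP0 : ∀ i j, 0 ≤ P i j := by
    intro i j
    rw [hPdef, Matrix.mul_apply]
    exact Finset.sum_nonneg fun l _ => mul_nonneg (hAinv i l)
      (by rw [Matrix.add_apply]; exact add_nonneg (hE0 l j) (hF0 l j))
  have hPG : P = Gr + P * Gr := by
    have h1 : A⁻¹ * T = 1 + P := by
      calc A⁻¹ * T = A⁻¹ * (A + (E + F)) := by rw [hTEF, add_assoc]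
      _ = A⁻¹ * A + A⁻¹ * (E + F) := Matrix.mul_add _ _ _
      _ = 1 + P := by rw [Matrix.nonsing_inv_mul _ hAdet]
    calc P = A⁻¹ * (E + F) := hPdef
    _ = A⁻¹ * (T * (T⁻¹ * (E + F))) := by
        rw [← Matrix.mul_assoc T, Matrix.mul_nonsing_inv _ hTdet, Matrix.one_mul]
    _ = (A⁻¹ * T) * Gr := by rw [Matrix.mul_assoc]
    _ = (1 + P) * Gr := by rw [h1]
    _ = Gr + P * Gr := by rw [Matrix.add_mul, Matrix.one_mul]
  have hPGr : P * Gr = P - Gr := by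
    conv_rhs => rw [hPG]
    abel
  have hPsum : ∀ k : ℕ, (∑ j ∈ Finset.range k, Gr ^ (j+1)) + P * Gr ^ k = P := by
    intro k
    induction k with
    | zero => simp
    | succ k ih =>
      have h2 : P * Gr ^ (k+1) = P * Gr ^ k - Gr ^ (k+1) := by
        rw [pow_succ' Gr k, ← Matrix.mul_assoc, hPGr, Matrix.sub_mul, ← pow_succ']
      rw [Finset.sum_range_succ, h2,
        show (∑ j ∈ Finset.range k, Gr ^ (j+1)) + Gr ^ (k+1) + (P * Gr ^ k - Gr ^ (k+1))
          = (∑ j ∈ Finset.range k, Gr ^ (j+1)) + P * Gr ^ k from by abel, ih]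
  have hGrk0 : ∀ k i j, 0 ≤ (Gr ^ k) i j := GSORAux.pow_entries_nonneg Gr hGr0
  have hbound : ∀ (a b : Fin n) (k : ℕ), (∑ j ∈ Finset.range k, (Gr ^ (j+1)) a b) ≤ P a b := by
    intro a b k
    have h1 := congr_fun (congr_fun (hPsum k) a) b
    have h2 : (∑ j ∈ Finset.range k, Gr ^ (j+1)) a b = ∑ j ∈ Finset.range k, (Gr ^ (j+1)) a b :=
      Matrix.sum_apply a b _ _
    have h3 : 0 ≤ (P * Gr ^ k) a b := by
      rw [Matrix.mul_apply]
      exact Finset.sum_nonneg fun l _ => mul_nonneg (hP0 a l) (hGrk0 k l b)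
    have h4 : ((∑ j ∈ Finset.range k, Gr ^ (j+1)) + P * Gr ^ k) a b
        = (∑ j ∈ Finset.range k, Gr ^ (j+1)) a b + (P * Gr ^ k) a b := Matrix.add_apply _ _ _ _
    rw [h1] at h4
    rw [← h2]
    linarith
  have hsummable : ∀ a b, Summable (fun j : ℕ => (Gr ^ (j+1)) a b) := fun a b =>
    summable_of_sum_range_le (fun k => hGrk0 (k+1) a b) (hbound a b)
  have htends : Tendsto (fun k : ℕ => ∑ a, ∑ b, (Gr ^ (k+1)) a b) atTop (𝓝 0) := by
    have h1 : ∀ (a b : Fin n), Tendsto (fun k : ℕ => (Gr ^ (k+1)) a b) atTop (𝓝 0) :=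
      fun a b => (hsummable a b).tendsto_atTop_zero
    have h2 := tendsto_finset_sum (univ : Finset (Fin n))
      (fun a _ => tendsto_finset_sum (univ : Finset (Fin n)) (fun b _ => h1 a b))
    simpa using h2
  obtain ⟨k₀, hk₀⟩ : ∃ k : ℕ, ∑ a, ∑ b, (Gr ^ (k+1)) a b < 1 :=
    (htends.eventually (gt_mem_nhds (by norm_num : (0:ℝ) < 1))).exists
  letI instN : NormedRing (Matrix (Fin n) (Fin n) ℂ) := Matrix.linftyOpNormedRing
  letI instA : NormedAlgebra ℂ (Matrix (Fin n) (Fin n) ℂ) := Matrix.linftyOpNormedAlgebra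
  haveI instC : CompleteSpace (Matrix (Fin n) (Fin n) ℂ) := FiniteDimensional.complete ℂ _
  have hrowle : ∀ (X : Matrix (Fin n) (Fin n) ℝ), (∀ a b, 0 ≤ X a b) → ∀ i,
      ∑ j, X i j ≤ ‖X.map Complex.ofReal‖ := by
    intro X hX i
    rw [Matrix.linfty_opNorm_def]
    have h1 : ∑ j, X i j = ((∑ j, ‖(X.map Complex.ofReal) i j‖₊ : NNReal) : ℝ) := by
      rw [NNReal.coe_sum]
      refine Finset.sum_congr rfl fun j _ => ?_
      rw [coe_nnnorm, Matrix.map_apply, Complex.norm_real, Real.norm_eq_abs,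
        abs_of_nonneg (hX i j)]
    rw [h1]
    exact_mod_cast Finset.le_sup (f := fun i => ∑ j, ‖(X.map Complex.ofReal) i j‖₊)
      (Finset.mem_univ i)
  have hk0n : ‖(Gr ^ (k₀+1)).map Complex.ofReal‖₊ < 1 := by
    rw [Matrix.linfty_opNNNorm_def]
    rw [Finset.sup_lt_iff (by norm_num : (⊥ : NNReal) < 1)]
    intro i _
    rw [← NNReal.coe_lt_coe, NNReal.coe_one, NNReal.coe_sum]
    have h1 : ∀ j, (‖(Gr ^ (k₀+1)).map Complex.ofReal i j‖₊ : ℝ) = (Gr ^ (k₀+1)) i j := by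
      intro j
      rw [coe_nnnorm, Matrix.map_apply, Complex.norm_real, Real.norm_eq_abs,
        abs_of_nonneg (hGrk0 (k₀+1) i j)]
    calc ∑ j, (‖(Gr ^ (k₀+1)).map Complex.ofReal i j‖₊ : ℝ) = ∑ j, (Gr ^ (k₀+1)) i j :=
          Finset.sum_congr rfl fun j _ => h1 j
    _ ≤ ∑ a, ∑ b, (Gr ^ (k₀+1)) a b :=
          Finset.single_le_sum (f := fun a => ∑ b, (Gr ^ (k₀+1)) a b)
            (fun a _ => Finset.sum_nonneg fun b _ => hGrk0 _ a b) (Finset.mem_univ i)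
    _ < 1 := hk₀
  have hone : ‖(1 : Matrix (Fin n) (Fin n) ℂ)‖₊ = 1 := by
    have hrow : ∀ i : Fin n, ∑ j, ‖(1 : Matrix (Fin n) (Fin n) ℂ) i j‖₊ = 1 := by
      intro i
      have h5 : ∀ j, ‖(1 : Matrix (Fin n) (Fin n) ℂ) i j‖₊ = if i = j then 1 else 0 := by
        intro j; by_cases h : i = j <;> simp [Matrix.one_apply, h]
      rw [Finset.sum_congr rfl fun j _ => h5 j, Finset.sum_ite_eq]
      simp
    rw [Matrix.linfty_opNNNorm_def]
    calc univ.sup (fun i => ∑ j, ‖(1 : Matrix (Fin n) (Fin n) ℂ) i j‖₊)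
        = univ.sup (fun _ : Fin n => (1:NNReal)) := Finset.sup_congr rfl fun i _ => hrow i
    _ = 1 := by rw [Finset.sup_const univ_nonempty]
  have hspec_le : spectralRadius ℂ (Gr.map Complex.ofReal) ≤ ENNReal.ofReal r := by
    refine iSup₂_le fun z hz => ?_
    rw [spectrum.mem_iff] at hz
    have hdet0 : ((algebraMap ℂ (Matrix (Fin n) (Fin n) ℂ)) z - Gr.map Complex.ofReal).det = 0 := by
      by_contra hne
      exact hz ((Matrix.isUnit_iff_isUnit_det _).mpr (isUnit_iff_ne_zero.mpr hne))
    obtain ⟨v, hv0, hveq⟩ := Matrix.exists_mulVec_eq_zero_iff.mpr hdet0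
    have heig : (Gr.map Complex.ofReal).mulVec v = z • v := by
      have h1 : ((algebraMap ℂ (Matrix (Fin n) (Fin n) ℂ)) z - Gr.map Complex.ofReal).mulVec v
          = z • v - (Gr.map Complex.ofReal).mulVec v := by
        rw [Matrix.sub_mulVec, Algebra.algebraMap_eq_smul_one, Matrix.smul_mulVec,
          Matrix.one_mulVec]
      rw [h1] at hveq
      exact (sub_eq_zero.mp hveq).symm
    have hzr := hGJ z v hv0 heig
    calc (‖z‖₊ : ENNReal) = ENNReal.ofReal ‖z‖ := (ofReal_norm z).symm
    _ ≤ ENNReal.ofReal r := ENNReal.ofReal_le_ofReal (by exact hzr)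
  have hsp_lt1 : spectralRadius ℂ (Gr.map Complex.ofReal) < 1 := by
    have h1 := spectrum.spectralRadius_le_pow_nnnorm_pow_one_div ℂ (Gr.map Complex.ofReal) k₀
    rw [hone, ENNReal.coe_one, ENNReal.one_rpow, mul_one, GSORAux.map_pow'] at h1
    refine lt_of_le_of_lt h1 ?_
    have h2 : ((‖(Gr ^ (k₀+1)).map Complex.ofReal‖₊ : NNReal) : ENNReal) < 1 := by
      rw [← ENNReal.coe_one, ENNReal.coe_lt_coe]
      exact hk0n
    exact ENNReal.rpow_lt_one h2 (by positivity)
  have hcne : spectralRadius ℂ (Gr.map Complex.ofReal) ≠ ⊤ :=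
    (lt_of_le_of_lt hspec_le ENNReal.ofReal_lt_top).ne
  set c : ℝ := (spectralRadius ℂ (Gr.map Complex.ofReal)).toReal with hcdef
  have hcr : c ≤ r := ENNReal.toReal_le_of_le_ofReal hr hspec_le
  have hc1 : c < 1 := by
    rw [hcdef, ← ENNReal.toReal_one]
    exact (ENNReal.toReal_lt_toReal hcne ENNReal.one_ne_top).mpr hsp_lt1
  have hc0 : 0 ≤ c := ENNReal.toReal_nonneg
  have hgel : Tendsto (fun k : ℕ => ‖(Gr.map Complex.ofReal) ^ k‖ ^ (1/(k:ℝ))) atTop (𝓝 c) := by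
    have h1 := spectrum.pow_nnnorm_pow_one_div_tendsto_nhds_spectralRadius (Gr.map Complex.ofReal)
    have h2 := (ENNReal.tendsto_toReal hcne).comp h1
    refine h2.congr fun k => ?_
    simp only [Function.comp_apply]
    rw [← ENNReal.toReal_rpow, ENNReal.coe_toReal, coe_nnnorm]
  have hIUJ : IsUnit (1 - ω • (T⁻¹ * E)) := by
    rw [Matrix.isUnit_iff_isUnit_det, isUnit_iff_ne_zero]
    intro hdet
    obtain ⟨w, hw0, hweq⟩ := Matrix.exists_mulVec_eq_zero_iff.mpr hdet
    have h1 : (T⁻¹ * E).mulVec w = ω⁻¹ • w := by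
      have h2 : w - ω • ((T⁻¹ * E).mulVec w) = 0 := by
        have h2' := hweq
        rw [Matrix.sub_mulVec, Matrix.one_mulVec, Matrix.smul_mulVec] at h2'
        exact h2'
      funext i
      have h3 := congr_fun h2 i
      simp only [Pi.sub_apply, Pi.smul_apply, smul_eq_mul, Pi.zero_apply] at h3
      simp only [Pi.smul_apply, smul_eq_mul]
      rw [inv_mul_eq_div, eq_div_iff hω0.ne']
      linarith
    set v : Fin n → ℂ := fun i => ((w i : ℝ) : ℂ) with hvdef
    have hv0 : v ≠ 0 := by
      intro hv
      apply hw0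
      funext i
      have := congr_fun hv i
      simpa [hvdef] using this
    have heig : ((T⁻¹ * E).map Complex.ofReal).mulVec v = ((ω⁻¹ : ℝ) : ℂ) • v := by
      funext i
      have h4 := congr_fun h1 i
      simp only [Matrix.mulVec, dotProduct, Pi.smul_apply, smul_eq_mul] at h4 ⊢
      simp only [Matrix.map_apply, hvdef]
      push_cast
      exact_mod_cast congrArg (fun t : ℝ => (t : ℂ)) h4
    have h5 := hTE (((ω⁻¹ : ℝ)) : ℂ) v hv0 heig
    rw [Complex.norm_real, Real.norm_eq_abs, abs_of_pos (inv_pos.mpr hω0), ← one_div] at h5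
    exact lt_irrefl _ h5
  have hfact : T - ω • E = T * (1 - ω • (T⁻¹ * E)) := by
    rw [Matrix.mul_sub, Matrix.mul_one, Matrix.mul_smul, ← Matrix.mul_assoc,
      Matrix.mul_nonsing_inv _ hTdet, Matrix.one_mul]
  have hWunit : IsUnit (T - ω • E) := by rw [hfact]; exact hTunit.mul hIUJ
  refine ⟨hWunit, ?_⟩
  intro lam v hv0 heig
  by_contra hcon
  push_neg at hcon
  set W : Matrix (Fin n) (Fin n) ℝ := T - ω • E with hWdef
  have hWdet : IsUnit W.det := (Matrix.isUnit_iff_isUnit_det W).mp hWunit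
  set Cm : Matrix (Fin n) (Fin n) ℝ := (1 - ω) • T + ω • F with hCdef
  have hWC : W * (W⁻¹ * Cm) = Cm := by
    rw [← Matrix.mul_assoc, Matrix.mul_nonsing_inv _ hWdet, Matrix.one_mul]
  have hstepA : (Cm.map Complex.ofReal).mulVec v = lam • ((W.map Complex.ofReal).mulVec v) := by
    conv_lhs => rw [← hWC, GSORAux.map_mul', ← Matrix.mulVec_mulVec, heig]
    rw [Matrix.mulVec_smul]
  have hCc : Cm.map Complex.ofReal
      = (1 - (ω:ℂ)) • T.map Complex.ofReal + (ω:ℂ) • F.map Complex.ofReal := by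
    ext i j
    simp only [Matrix.map_apply, Matrix.add_apply, Matrix.smul_apply, hCdef, smul_eq_mul]
    push_cast
    ring
  have hWc : W.map Complex.ofReal = T.map Complex.ofReal - (ω:ℂ) • E.map Complex.ofReal := by
    ext i j
    simp only [Matrix.map_apply, Matrix.sub_apply, Matrix.smul_apply, hWdef, smul_eq_mul]
    push_cast
    ring
  rw [hCc, hWc, Matrix.add_mulVec, Matrix.smul_mulVec, Matrix.smul_mulVec,
    Matrix.sub_mulVec, Matrix.smul_mulVec] at hstepA
  have hkey : ∀ i, ((E.map Complex.ofReal).mulVec v) i * (lam * ω)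
      + ((F.map Complex.ofReal).mulVec v) i * ω
      = ((T.map Complex.ofReal).mulVec v) i * (lam + ω - 1) := by
    intro i
    have h1 := congr_fun hstepA i
    simp only [Pi.add_apply, Pi.sub_apply, Pi.smul_apply, smul_eq_mul] at h1
    linear_combination h1
  set Tc := T.map Complex.ofReal with hTcdef
  set Ec := E.map Complex.ofReal with hEcdef
  set Fc := F.map Complex.ofReal with hFcdef
  have hTcdet : IsUnit Tc.det := by
    have h1 : Tc.det = ((T.det : ℝ) : ℂ) := by
      rw [hTcdef]
      exact (RingHom.map_det Complex.ofRealHom T).symm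
    rw [isUnit_iff_ne_zero, h1]
    exact_mod_cast isUnit_iff_ne_zero.mp hTdet
  have hTcinv : Tc⁻¹ = (T⁻¹).map Complex.ofReal := by
    apply Matrix.inv_eq_left_inv
    rw [hTcdef, ← GSORAux.map_mul', Matrix.nonsing_inv_mul _ hTdet, GSORAux.map_one']
  set μ : ℂ := (lam + (ω:ℂ) - 1) / (ω:ℂ) with hμdef
  have hωc : (ω:ℂ) ≠ 0 := Complex.ofReal_ne_zero.mpr hω0.ne'
  set B : Matrix (Fin n) (Fin n) ℂ := Tc⁻¹ * (lam • Ec + Fc) with hBdef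
  have hEFv : (lam • Ec + Fc).mulVec v = μ • (Tc.mulVec v) := by
    funext i
    rw [Matrix.add_mulVec, Matrix.smul_mulVec]
    simp only [Pi.add_apply, Pi.smul_apply, smul_eq_mul, hμdef]
    rw [div_mul_eq_mul_div, eq_div_iff hωc]
    linear_combination hkey i
  have hBv : B.mulVec v = μ • v := by
    rw [hBdef, ← Matrix.mulVec_mulVec, hEFv, Matrix.mulVec_smul, Matrix.mulVec_mulVec,
      Matrix.nonsing_inv_mul _ hTcdet, Matrix.one_mulVec]
  have hBk : ∀ k : ℕ, (B ^ k).mulVec v = (μ ^ k) • v := by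
    intro k
    induction k with
    | zero => simp [Matrix.one_mulVec]
    | succ k ih =>
      rw [pow_succ', ← Matrix.mulVec_mulVec, ih, Matrix.mulVec_smul, hBv, smul_smul, ← pow_succ]
  set Mr : Matrix (Fin n) (Fin n) ℝ := ‖lam‖ • Gr with hMdef
  have hBle : ∀ i j, ‖B i j‖ ≤ Mr i j := by
    intro i j
    rw [hBdef, Matrix.mul_apply]
    refine (norm_sum_le _ _).trans ?_
    have hterm : ∀ l, ‖Tc⁻¹ i l * (lam • Ec + Fc) l j‖
        ≤ ‖lam‖ * (T⁻¹ i l * ((E + F) l j)) := by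
      intro l
      rw [norm_mul, hTcinv, Matrix.map_apply, Complex.norm_real, Real.norm_eq_abs,
        abs_of_nonneg (hTinv0 i l)]
      have h2 : ‖(lam • Ec + Fc) l j‖ ≤ ‖lam‖ * ((E + F) l j) := by
        simp only [Matrix.add_apply, Matrix.smul_apply, smul_eq_mul, hEcdef, hFcdef,
          Matrix.map_apply]
        refine (norm_add_le _ _).trans ?_
        rw [norm_mul, Complex.norm_real, Real.norm_eq_abs, Complex.norm_real, Real.norm_eq_abs,
          abs_of_nonneg (hE0 l j), abs_of_nonneg (hF0 l j)]
        have h3 : F l j ≤ ‖lam‖ * F l j := le_mul_of_one_le_left (hF0 l j) hcon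
        nlinarith [norm_nonneg lam, hE0 l j]
      calc T⁻¹ i l * ‖(lam • Ec + Fc) l j‖
          ≤ T⁻¹ i l * (‖lam‖ * ((E + F) l j)) :=
            mul_le_mul_of_nonneg_left h2 (hTinv0 i l)
      _ = ‖lam‖ * (T⁻¹ i l * ((E + F) l j)) := by ring
    refine (Finset.sum_le_sum fun l _ => hterm l).trans ?_
    rw [hMdef, Matrix.smul_apply, hGrdef, Matrix.mul_apply, smul_eq_mul, Finset.mul_sum]
  have hMk : ∀ k i j, ‖(B ^ k) i j‖ ≤ (Mr ^ k) i j :=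
    fun k => GSORAux.abs_pow_le B Mr hBle k
  have hMpow : ∀ k : ℕ, Mr ^ k = ((‖lam‖) ^ k) • Gr ^ k := by
    intro k
    rw [hMdef, smul_pow]
  have hlampos : (0:ℝ) < ‖lam‖ := lt_of_lt_of_le one_pos hcon
  have hmu_k : ∀ k : ℕ, (‖μ‖) ^ k ≤ (‖lam‖) ^ k * ‖(Gr ^ k).map Complex.ofReal‖ := by
    intro k
    obtain ⟨i₀, -, hmax⟩ := Finset.exists_max_image univ (fun i => ‖v i‖) univ_nonempty
    have hvpos : 0 < ‖v i₀‖ := by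
      obtain ⟨j, hj⟩ := Function.ne_iff.mp hv0
      exact lt_of_lt_of_le (norm_pos_iff.mpr hj) (hmax j (Finset.mem_univ j))
    have h1 : (‖μ‖) ^ k * ‖v i₀‖ = ‖((B ^ k).mulVec v) i₀‖ := by
      rw [hBk k]
      simp only [Pi.smul_apply, smul_eq_mul, norm_mul, norm_pow]
    have h2 : ‖((B ^ k).mulVec v) i₀‖ ≤ (∑ j, (Mr ^ k) i₀ j) * ‖v i₀‖ := by
      simp only [Matrix.mulVec, dotProduct]
      refine (norm_sum_le _ _).trans ?_
      rw [Finset.sum_mul]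
      refine Finset.sum_le_sum fun j _ => ?_
      rw [norm_mul]
      exact mul_le_mul (hMk k i₀ j) (hmax j (Finset.mem_univ j)) (norm_nonneg _)
        ((norm_nonneg _).trans (hMk k i₀ j))
    have h3 : ∑ j, (Mr ^ k) i₀ j = (‖lam‖) ^ k * ∑ j, (Gr ^ k) i₀ j := by
      rw [hMpow k, Finset.mul_sum]
      exact Finset.sum_congr rfl fun j _ => by rw [Matrix.smul_apply, smul_eq_mul]
    have h4 : ∑ j, (Gr ^ k) i₀ j ≤ ‖(Gr ^ k).map Complex.ofReal‖ := hrowle _ (hGrk0 k) i₀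
    have h5 : (∑ j, (Mr ^ k) i₀ j) * ‖v i₀‖
        ≤ ((‖lam‖) ^ k * ‖(Gr ^ k).map Complex.ofReal‖) * ‖v i₀‖ := by
      refine mul_le_mul_of_nonneg_right ?_ hvpos.le
      rw [h3]
      exact mul_le_mul_of_nonneg_left h4 (pow_nonneg hlampos.le k)
    have h6 := h1.trans_le (h2.trans h5)
    exact le_of_mul_le_mul_right h6 hvpos
  have hmu_le : ‖μ‖ ≤ ‖lam‖ * c := by
    have hlim : Tendsto (fun k : ℕ => ‖lam‖ * ‖(Gr.map Complex.ofReal) ^ k‖ ^ (1/(k:ℝ)))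
        atTop (𝓝 (‖lam‖ * c)) := hgel.const_mul _
    refine ge_of_tendsto hlim ?_
    rw [eventually_atTop]
    refine ⟨1, fun k hk => ?_⟩
    have hkpos : (0:ℝ) < (k:ℝ) := by exact_mod_cast hk
    have h6 : (‖μ‖ / ‖lam‖) ^ k ≤ ‖(Gr.map Complex.ofReal) ^ k‖ := by
      rw [div_pow, div_le_iff₀ (pow_pos hlampos k), GSORAux.map_pow']
      rw [mul_comm]
      exact hmu_k k
    have hdiv0 : 0 ≤ ‖μ‖ / ‖lam‖ :=
      div_nonneg (norm_nonneg μ) hlampos.le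
    have h7 : ‖μ‖ / ‖lam‖ ≤ ‖(Gr.map Complex.ofReal) ^ k‖ ^ (1/(k:ℝ)) := by
      have h8 := Real.rpow_le_rpow (pow_nonneg hdiv0 k) h6 (one_div_nonneg.mpr hkpos.le)
      rwa [← Real.rpow_natCast (‖μ‖ / ‖lam‖) k, ← Real.rpow_mul hdiv0,
        mul_one_div, div_self hkpos.ne', Real.rpow_one] at h8
    calc ‖μ‖ = (‖μ‖ / ‖lam‖) * ‖lam‖ :=
          (div_mul_cancel₀ _ hlampos.ne').symm
    _ ≤ ‖(Gr.map Complex.ofReal) ^ k‖ ^ (1/(k:ℝ)) * ‖lam‖ :=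
          mul_le_mul_of_nonneg_right h7 hlampos.le
    _ = ‖lam‖ * ‖(Gr.map Complex.ofReal) ^ k‖ ^ (1/(k:ℝ)) := mul_comm _ _
  have habsμ : (‖lam‖ - |1 - ω|) / ω ≤ ‖μ‖ := by
    rw [hμdef, norm_div]
    have h1 : ‖(ω:ℂ)‖ = ω := by rw [Complex.norm_real, Real.norm_eq_abs, abs_of_pos hω0]
    rw [h1]
    refine (div_le_div_iff_of_pos_right hω0).mpr ?_
    have h3 : ‖lam‖ - ‖(1:ℂ) - (ω:ℂ)‖ ≤ ‖lam - ((1:ℂ) - (ω:ℂ))‖ := by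
      have := norm_sub_norm_le lam ((1:ℂ) - (ω:ℂ))
      simpa using this
    have h4 : ‖(1:ℂ) - (ω:ℂ)‖ = |1 - ω| := by
      rw [show ((1:ℂ) - (ω:ℂ)) = (((1 - ω : ℝ)):ℂ) by push_cast; ring, Complex.norm_real, Real.norm_eq_abs]
    have h5 : lam - ((1:ℂ) - (ω:ℂ)) = lam + (ω:ℂ) - 1 := by ring
    rw [h4, h5] at h3
    exact h3
  have hclaim : |1 - ω| < 1 - ω * c := by
    rcases le_or_gt ω 1 with h | h
    · rw [abs_of_nonneg (by linarith)]
      have h5 := mul_lt_mul_of_pos_left hc1 hω0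
      linarith
    · rw [abs_of_neg (by linarith)]
      have h2 : ω * (1 + r) < 2 := (lt_div_iff₀ (by linarith : (0:ℝ) < 1 + r)).mp hω2
      rw [mul_add, mul_one] at h2
      have h6 := mul_le_mul_of_nonneg_left hcr hω0.le
      linarith
  have hfinal : ‖lam‖ * (1 - ω * c) ≤ |1 - ω| := by
    have h1 : (‖lam‖ - |1 - ω|) / ω ≤ ‖lam‖ * c := le_trans habsμ hmu_le
    rw [div_le_iff₀ hω0] at h1
    have h2 : ‖lam‖ * (1 - ω * c) = ‖lam‖ - ‖lam‖ * c * ω := by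
      ring
    rw [h2]
    linarith
  have hpos : 0 < 1 - ω * c := lt_of_le_of_lt (abs_nonneg _) hclaim
  have h9 := mul_le_mul_of_nonneg_right hcon hpos.le
  rw [one_mul] at h9
  linarith
end

section
/- Let A be an n×n real strictly diagonally dominant matrix (|a_{ii}| > Σ_{j≠i}|a_{ij}| for all i), fix m < n with banded decomposition A = T_m − E_m − F_m, and let 0 < ω ≤ 1. Then T_m − ω E_m is invertible and every complex eigenvalue λ of the GSOR iteration matrix (T_m − ω E_m)⁻¹[(1−ω)T_m + ω F_m] satisfies |λ| < 1 (the generalized SOR method converges for every initial guess). -/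
open Matrix Finset

/-- Generalized SOR with 0 < ω ≤ 1 converges for strictly diagonally dominant matrices. -/
theorem gsor_converges_of_sdd (n m : ℕ) (hm : m < n)
    (A T E F : Matrix (Fin n) (Fin n) ℝ) (ω : ℝ)
    (hω0 : 0 < ω) (hω1 : ω ≤ 1)
    (hSDD : ∀ i, ∑ j ∈ Finset.univ.erase i, |A i j| < |A i i|)
(hT : ∀ i j, T i j = if |(i : ℤ) - (j : ℤ)| ≤ (m : ℤ) then A i j else 0)
    (hE : ∀ i j, E i j = if (j : ℤ) + (m : ℤ) < (i : ℤ) then -A i j else 0)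
    (hF : ∀ i j, F i j = if (i : ℤ) + (m : ℤ) < (j : ℤ) then -A i j else 0) :
    IsUnit (T - ω • E) ∧
      ∀ (lam : ℂ) (v : Fin n → ℂ), v ≠ 0 →
        (((T - ω • E)⁻¹ * ((1 - ω) • T + ω • F)).map (Complex.ofReal)).mulVec v = lam • v →
        ‖lam‖ < 1 := by
  -- entries of B := T - ω • E
  have hBkk : ∀ k : Fin n, (T - ω • E) k k = A k k := by
    intro k
    rw [Matrix.sub_apply, Matrix.smul_apply, hT, hE, smul_eq_mul,
      if_pos (by simp), if_neg (by omega), mul_zero, sub_zero]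
  have hBoff : ∀ k j : Fin n, ‖(T - ω • E) k j‖ ≤ |A k j| := by
    intro k j
    rw [Real.norm_eq_abs, Matrix.sub_apply, Matrix.smul_apply, hT, hE, smul_eq_mul]
    by_cases h1 : |(k : ℤ) - (j : ℤ)| ≤ (m : ℤ)
    · have h2 : ¬ ((j : ℤ) + (m : ℤ) < (k : ℤ)) := by
        have := (abs_le.mp h1).2; omega
      rw [if_pos h1, if_neg h2, mul_zero, sub_zero]
    · rw [if_neg h1]
      by_cases h2 : (j : ℤ) + (m : ℤ) < (k : ℤ)
      · rw [if_pos h2, zero_sub, mul_neg, neg_neg, abs_mul, abs_of_pos hω0]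
        exact mul_le_of_le_one_left (abs_nonneg _) hω1
      · rw [if_neg h2, mul_zero, sub_zero, abs_zero]
        exact abs_nonneg _
  have hBdd : ∀ k, ∑ j ∈ Finset.univ.erase k, ‖(T - ω • E) k j‖ < ‖(T - ω • E) k k‖ := by
    intro k
    calc ∑ j ∈ Finset.univ.erase k, ‖(T - ω • E) k j‖
        ≤ ∑ j ∈ Finset.univ.erase k, |A k j| :=
          Finset.sum_le_sum fun j _ => hBoff k j
      _ < |A k k| := hSDD k
      _ = ‖(T - ω • E) k k‖ := by rw [hBkk, Real.norm_eq_abs]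
  have hdet : (T - ω • E).det ≠ 0 := det_ne_zero_of_sum_row_lt_diag hBdd
  have hdetU : IsUnit (T - ω • E).det := isUnit_iff_ne_zero.mpr hdet
  have hU : IsUnit (T - ω • E) := (Matrix.isUnit_iff_isUnit_det _).mpr hdetU
  refine ⟨hU, fun lam v hv heig => ?_⟩
  by_contra hcon
  push_neg at hcon
  -- notation
  set BC := (T - ω • E).map (Complex.ofReal) with hBCdef
  set CC := ((1 - ω) • T + ω • F).map (Complex.ofReal) with hCCdef
  set M := lam • BC - CC with hMdef
  have h1al : 1 ≤ ‖lam‖ := hcon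
  set c := ‖lam - (1 - (ω : ℂ))‖ with hcdef
  have hc1 : ω * ‖lam‖ ≤ c := by
    have h2 : ‖lam‖ - ‖(1 - (ω : ℂ))‖ ≤ ‖lam - (1 - (ω : ℂ))‖ := norm_sub_norm_le _ _
    have h3 : (1 - (ω : ℂ)) = ((1 - ω : ℝ) : ℂ) := by push_cast; ring
    simp only [h3, Complex.norm_real, Real.norm_eq_abs,
      abs_of_nonneg (show (0:ℝ) ≤ 1 - ω by linarith)] at h2
    rw [hcdef, h3]
    nlinarith [h2]
  have hcω : ω ≤ c := by
    have : ω * 1 ≤ ω * ‖lam‖ := by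
      exact mul_le_mul_of_nonneg_left h1al hω0.le
    linarith
  have hc0 : 0 < c := lt_of_lt_of_le hω0 hcω
  -- entries of M
  have hMentry : ∀ i j, M i j =
      lam * Complex.ofReal (T i j - ω * E i j)
        - Complex.ofReal ((1 - ω) * T i j + ω * F i j) := by
    intro i j
    simp [hMdef, hBCdef, hCCdef, Matrix.sub_apply, Matrix.smul_apply, Matrix.add_apply,
      Matrix.map_apply, smul_eq_mul]
  have hMband : ∀ i j : Fin n, |(i : ℤ) - (j : ℤ)| ≤ (m : ℤ) →
      M i j = (lam - (1 - (ω : ℂ))) * (A i j : ℂ) := by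
    intro i j h1
    have h2 : ¬ ((j : ℤ) + (m : ℤ) < (i : ℤ)) := by have := (abs_le.mp h1).2; omega
    have h3 : ¬ ((i : ℤ) + (m : ℤ) < (j : ℤ)) := by have := (abs_le.mp h1).1; omega
    rw [hMentry, hT, hE, hF, if_pos h1, if_neg h2, if_neg h3]
    push_cast
    ring
  have hMdiag : ∀ i : Fin n, ‖M i i‖ = c * |A i i| := by
    intro i
    rw [hMband i i (by simp), norm_mul, Complex.norm_real, Real.norm_eq_abs, hcdef]
  have hMoff : ∀ i j : Fin n, ‖M i j‖ ≤ c * |A i j| := by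
    intro i j
    by_cases h1 : |(i : ℤ) - (j : ℤ)| ≤ (m : ℤ)
    · rw [hMband i j h1, norm_mul, Complex.norm_real, Real.norm_eq_abs]
    · have h1' : (m : ℤ) < |(i : ℤ) - (j : ℤ)| := lt_of_not_ge h1
      rcases lt_abs.mp h1' with h2 | h2
      · -- i > j + m : E part
        have hc2 : (j : ℤ) + (m : ℤ) < (i : ℤ) := by omega
        have hc3 : ¬ ((i : ℤ) + (m : ℤ) < (j : ℤ)) := by omega
        have : M i j = lam * ((ω : ℂ) * (A i j : ℂ)) := by
          rw [hMentry, hT, hE, hF, if_neg h1, if_pos hc2, if_neg hc3]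
          push_cast
          ring
        rw [this, norm_mul, norm_mul, Complex.norm_real, Real.norm_eq_abs, Complex.norm_real, Real.norm_eq_abs,
          abs_of_pos hω0]
        nlinarith [abs_nonneg (A i j), hc1]
      · -- j > i + m : F part
        have hc2 : ¬ ((j : ℤ) + (m : ℤ) < (i : ℤ)) := by omega
        have hc3 : (i : ℤ) + (m : ℤ) < (j : ℤ) := by omega
        have : M i j = (ω : ℂ) * (A i j : ℂ) := by
          rw [hMentry, hT, hE, hF, if_neg h1, if_neg hc2, if_pos hc3]
          push_cast
          ring
        rw [this, norm_mul, Complex.norm_real, Real.norm_eq_abs, Complex.norm_real, Real.norm_eq_abs, abs_of_pos hω0]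
        nlinarith [abs_nonneg (A i j), hcω]
  -- M kills v
  have hveq : M.mulVec v = 0 := by
    have hcancel : (T - ω • E) * ((T - ω • E)⁻¹ * ((1 - ω) • T + ω • F))
        = (1 - ω) • T + ω • F :=
      Matrix.mul_nonsing_inv_cancel_left _ _ hdetU
    have hmap : BC * (((T - ω • E)⁻¹ * ((1 - ω) • T + ω • F)).map Complex.ofReal) = CC := by
      rw [hBCdef, hCCdef, show (Complex.ofReal : ℝ → ℂ) = ⇑Complex.ofRealHom from rfl,
        ← Matrix.map_mul, hcancel]
    have h4 : BC.mulVec ((((T - ω • E)⁻¹ * ((1 - ω) • T + ω • F)).map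
        Complex.ofReal).mulVec v) = CC.mulVec v := by
      rw [Matrix.mulVec_mulVec, hmap]
    rw [heig, Matrix.mulVec_smul] at h4
    rw [hMdef, Matrix.sub_mulVec, Matrix.smul_mulVec, h4, sub_self]
  have hdetM : M.det = 0 := (Matrix.exists_mulVec_eq_zero_iff).mp ⟨v, hv, hveq⟩
  have hMne : M.det ≠ 0 := by
    apply det_ne_zero_of_sum_row_lt_diag
    intro k
    calc ∑ j ∈ Finset.univ.erase k, ‖M k j‖
        ≤ ∑ j ∈ Finset.univ.erase k, c * |A k j| := by
          refine Finset.sum_le_sum fun j _ => ?_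
          exact hMoff k j
      _ = c * ∑ j ∈ Finset.univ.erase k, |A k j| := by rw [Finset.mul_sum]
      _ < c * |A k k| := mul_lt_mul_of_pos_left (hSDD k) hc0
      _ = ‖M k k‖ := by rw [hMdiag]
  exact hMne hdetM
end

section
/- Let A be an n×n nonsingular M-matrix (nonpositive off-diagonal entries, invertible, entrywise nonnegative inverse) and fix 0 ≤ m < n. Then the banded matrix T_m, defined by (T_m)_{ij} = a_{ij} if |i−j| ≤ m and 0 otherwise, is itself a nonsingular M-matrix: its off-diagonal entries are nonpositive, it is invertible, and T_m⁻¹ is entrywise nonnegative. -/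
open Matrix Finset

section Key

attribute [local instance] Matrix.linftyOpNormedAddCommGroup Matrix.linftyOpNormedRing

noncomputable local instance (n : ℕ) : @CompleteSpace (Matrix (Fin n) (Fin n) ℝ)
    (@PseudoMetricSpace.toUniformSpace _ (Matrix.linftyOpNormedRing (α := ℝ) (n := Fin n)).toPseudoMetricSpace) :=
  (by infer_instance : CompleteSpace ((Fin n) → (Fin n) → ℝ))

private lemma pow_entry_nonneg {n : ℕ} (B : Matrix (Fin n) (Fin n) ℝ)
    (hB : ∀ i j, 0 ≤ B i j) (k : ℕ) : ∀ i j, 0 ≤ (B ^ k) i j := by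
  induction k with
  | zero =>
    intro i j
    rw [pow_zero]
    by_cases h : i = j <;> simp [Matrix.one_apply, h]
  | succ k ih =>
    intro i j
    rw [pow_succ, Matrix.mul_apply]
    exact Finset.sum_nonneg fun l _ => mul_nonneg (ih i l) (hB l j)

private lemma entry_norm_le {n : ℕ} (M : Matrix (Fin n) (Fin n) ℝ) (i j : Fin n) :
    ‖M i j‖ ≤ ‖M‖ := by
  have h1 : ‖M i j‖₊ ≤ ∑ j', ‖M i j'‖₊ :=
    Finset.single_le_sum (f := fun j' => ‖M i j'‖₊) (fun _ _ => zero_le) (Finset.mem_univ j)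
  have h2 : (∑ j', ‖M i j'‖₊) ≤ ‖M‖₊ := by
    rw [Matrix.linfty_opNNNorm_def]
    exact Finset.le_sup (f := fun i => ∑ j', ‖M i j'‖₊) (Finset.mem_univ i)
  exact_mod_cast h1.trans h2

private lemma key {n : ℕ} (B : Matrix (Fin n) (Fin n) ℝ) (hB : ∀ i j, 0 ≤ B i j)
    (hrow : ∀ i, ∑ j, B i j < 1) :
    IsUnit (1 - B) ∧ ∀ i j, 0 ≤ (1 - B)⁻¹ i j := by
  have hnn : ‖B‖₊ < 1 := by
    rw [Matrix.linfty_opNNNorm_def]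
    refine (Finset.sup_lt_iff (by norm_num)).mpr ?_
    intro i _
    rw [← NNReal.coe_lt_coe]
    push_cast
    calc ∑ j, (‖B i j‖₊ : ℝ) = ∑ j, B i j := by
          refine Finset.sum_congr rfl fun j _ => ?_
          rw [coe_nnnorm, Real.norm_eq_abs, abs_of_nonneg (hB i j)]
      _ < 1 := hrow i
  have hnorm : ‖B‖ < 1 := by
    have := hnn
    rw [← NNReal.coe_lt_coe] at this
    simpa using this
  have hU : IsUnit (1 - B) := isUnit_one_sub_of_norm_lt_one hnorm
  refine ⟨hU, fun i j => ?_⟩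
  have hsum : HasSum (fun k : ℕ => B ^ k) (Ring.inverse (1 - B)) :=
    hasSum_geom_series_inverse B hnorm
  let e : Matrix (Fin n) (Fin n) ℝ →L[ℝ] ℝ :=
    LinearMap.mkContinuous
      { toFun := fun M => M i j
        map_add' := fun _ _ => rfl
        map_smul' := fun _ _ => rfl } 1
      (fun M => by rw [one_mul]; exact entry_norm_le M i j)
  have hsum' : HasSum (fun k : ℕ => (B ^ k) i j) ((Ring.inverse (1 - B)) i j) :=
    e.hasSum hsum
  have hnonneg : 0 ≤ (Ring.inverse (1 - B)) i j :=
    hasSum_le (fun k => pow_entry_nonneg B hB k i j) hasSum_zero hsum'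
  rwa [Matrix.nonsing_inv_eq_ringInverse]

end Key

/-- The banded part T_m of a nonsingular M-matrix is itself a nonsingular M-matrix. -/
theorem banded_part_of_Mmatrix_is_Mmatrix (n m : ℕ) (hm : m < n)
    (A T : Matrix (Fin n) (Fin n) ℝ)
    (hZ : ∀ i j, i ≠ j → A i j ≤ 0)
    (hA : IsUnit A)
    (hAinv : ∀ i j, 0 ≤ A⁻¹ i j)
    (hT : ∀ i j, T i j = if |(i : ℤ) - (j : ℤ)| ≤ (m : ℤ) then A i j else 0) :
    (∀ i j, i ≠ j → T i j ≤ 0) ∧ IsUnit T ∧ ∀ i j, 0 ≤ T⁻¹ i j := by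
  have hAdet : IsUnit A.det := (Matrix.isUnit_iff_isUnit_det A).mp hA
  -- Z-property of T
  have hTZ : ∀ i j, i ≠ j → T i j ≤ 0 := by
    intro i j hij
    rw [hT]
    split
    · exact hZ i j hij
    · exact le_refl 0
  -- the positive vector x = A⁻¹ 1
  set x : Fin n → ℝ := A⁻¹ *ᵥ (fun _ => 1) with hxdef
  have hxnn : ∀ i, 0 ≤ x i := by
    intro i
    rw [hxdef]
    unfold Matrix.mulVec dotProduct
    exact Finset.sum_nonneg fun j _ => mul_nonneg (hAinv i j) zero_le_one
  have hAAinv : A * A⁻¹ = 1 := Matrix.mul_nonsing_inv A hAdet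
  have hAinvA : A⁻¹ * A = 1 := Matrix.nonsing_inv_mul A hAdet
  have hAx : A *ᵥ x = fun _ => 1 := by
    rw [hxdef, Matrix.mulVec_mulVec, hAAinv, Matrix.one_mulVec]
  have hxpos : ∀ i, 0 < x i := by
    intro i
    have h1 : ∑ j, A⁻¹ i j * A j i = 1 := by
      have := congrArg (fun M => M i i) hAinvA
      simpa [Matrix.mul_apply, Matrix.one_apply] using this
    by_contra hc
    push_neg at hc
    have hx0 : x i = 0 := le_antisymm hc (hxnn i)
    have hall : ∀ j, A⁻¹ i j = 0 := by
      intro j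
      have hsum0 : ∑ j, A⁻¹ i j = 0 := by
        have : x i = ∑ j, A⁻¹ i j * 1 := rfl
        simpa [this] using hx0
      have := (Finset.sum_eq_zero_iff_of_nonneg
        (fun j _ => hAinv i j)).mp hsum0
      exact this j (Finset.mem_univ j)
    rw [Finset.sum_congr rfl (fun j _ => by rw [hall j, zero_mul])] at h1
    simp at h1
  -- T x ≥ 1 entrywise
  have hTdiag : ∀ i, T i i = A i i := by
    intro i
    rw [hT]
    simp
  have hTA : ∀ i j, A i j ≤ T i j := by
    intro i j
    rw [hT]
    split
    · exact le_refl _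
    · rename_i h
      have hij : i ≠ j := by
        rintro rfl
        exact h (by simp)
      exact hZ i j hij
  have hTx : ∀ i, (1:ℝ) ≤ (T *ᵥ x) i := by
    intro i
    have h1 : (A *ᵥ x) i = 1 := by rw [hAx]
    have h2 : (A *ᵥ x) i ≤ (T *ᵥ x) i := by
      unfold Matrix.mulVec dotProduct
      exact Finset.sum_le_sum fun j _ => mul_le_mul_of_nonneg_right (hTA i j) (hxnn j)
    rw [← h1]; exact h2
  -- positive diagonal
  have hdpos : ∀ i, 0 < T i i * x i := by
    intro i
    have h1 : (T *ᵥ x) i ≤ T i i * x i := by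
      have : (T *ᵥ x) i = T i i * x i + ∑ j ∈ univ.erase i, T i j * x j := by
        unfold Matrix.mulVec dotProduct
        rw [← Finset.add_sum_erase _ _ (Finset.mem_univ i)]
      rw [this]
      have : ∑ j ∈ univ.erase i, T i j * x j ≤ 0 :=
        Finset.sum_nonpos fun j hj =>
          mul_nonpos_of_nonpos_of_nonneg
            (hTZ i j (fun h => (Finset.mem_erase.mp hj).1 h.symm)) (hxnn j)
      linarith
    linarith [hTx i]
  have hTiipos : ∀ i, 0 < T i i := by
    intro i
    rcases mul_pos_iff.mp (hdpos i) with h | h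
    · exact h.1
    · linarith [hxpos i, h.2]
  have hmv : ∀ i, (T *ᵥ x) i = ∑ j, T i j * x j := fun i => rfl
  -- the nonnegative matrix B with row sums < 1
  set B : Matrix (Fin n) (Fin n) ℝ :=
    Matrix.of (fun i j => if i = j then 0 else -T i j * x j / (T i i * x i)) with hBdef
  have hBnn : ∀ i j, 0 ≤ B i j := by
    intro i j
    rw [hBdef]
    by_cases h : i = j
    · simp [h]
    · simp only [Matrix.of_apply, if_neg h]
      exact div_nonneg (mul_nonneg (neg_nonneg.mpr (hTZ i j h)) (hxnn j)) (hdpos i).le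
  have hBrow : ∀ i, ∑ j, B i j < 1 := by
    intro i
    have h2 : ∑ j, (if i = j then 0 else -T i j * x j) = T i i * x i - (T *ᵥ x) i := by
      calc ∑ j, (if i = j then 0 else -T i j * x j)
          = ∑ j, ((if i = j then T i j * x j else 0) - T i j * x j) := by
            refine Finset.sum_congr rfl fun j _ => ?_
            by_cases h : i = j <;> simp [h]
        _ = (∑ j, if i = j then T i j * x j else 0) - ∑ j, T i j * x j :=
            Finset.sum_sub_distrib _ _
        _ = T i i * x i - (T *ᵥ x) i := by
            rw [Finset.sum_ite_eq, hmv i]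
            simp
    have hsum : ∑ j, B i j = (T i i * x i - (T *ᵥ x) i) / (T i i * x i) := by
      rw [← h2, Finset.sum_div]
      refine Finset.sum_congr rfl fun j _ => ?_
      rw [hBdef]
      by_cases h : i = j <;> simp [h]
    rw [hsum, div_lt_one (hdpos i)]
    linarith [hTx i]
  obtain ⟨hCunit, hCinv⟩ := key B hBnn hBrow
  have hdetC : IsUnit (1 - B).det := (Matrix.isUnit_iff_isUnit_det _).mp hCunit
  -- the factorization T = D * (1 - B) * E
  set D : Matrix (Fin n) (Fin n) ℝ := Matrix.diagonal (fun i => T i i * x i) with hDdef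
  set E : Matrix (Fin n) (Fin n) ℝ := Matrix.diagonal (fun j => (x j)⁻¹) with hEdef
  have hfact : T = D * (1 - B) * E := by
    ext i j
    rw [hDdef, hEdef, Matrix.mul_diagonal, Matrix.diagonal_mul]
    rcases eq_or_ne i j with rfl | h
    · have h1 : (1 - B) i i = 1 := by
        simp [hBdef, Matrix.sub_apply, Matrix.one_apply]
      rw [h1]
      rw [mul_one, mul_assoc, mul_inv_cancel₀ (hxpos i).ne', mul_one]
    · have h1 : (1 - B) i j = T i j * x j / (T i i * x i) := by
        simp only [hBdef, Matrix.sub_apply, Matrix.one_apply_ne h, Matrix.of_apply, if_neg h]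
        ring
      rw [h1]
      have hne1 : T i i * x i ≠ 0 := (hdpos i).ne'
      have hne2 : x j ≠ 0 := (hxpos j).ne'
      field_simp
      rw [mul_assoc, mul_div_cancel_right₀ _ hne1]
  -- invertibility of T
  have hDunit : IsUnit D := by
    rw [hDdef, Matrix.isUnit_iff_isUnit_det, Matrix.det_diagonal, isUnit_iff_ne_zero]
    exact Finset.prod_ne_zero_iff.mpr fun i _ => (hdpos i).ne'
  have hEunit : IsUnit E := by
    rw [hEdef, Matrix.isUnit_iff_isUnit_det, Matrix.det_diagonal, isUnit_iff_ne_zero]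
    exact Finset.prod_ne_zero_iff.mpr fun i _ => inv_ne_zero (hxpos i).ne'
  have hTunit : IsUnit T := by
    rw [hfact]
    exact (hDunit.mul hCunit).mul hEunit
  refine ⟨hTZ, hTunit, ?_⟩
  -- explicit left inverse of T
  set M : Matrix (Fin n) (Fin n) ℝ :=
    Matrix.diagonal x * (1 - B)⁻¹ * Matrix.diagonal (fun j => (T j j * x j)⁻¹) with hMdef
  have hMT' : M * (D * (1 - B) * E) = 1 := by
    rw [hMdef, hDdef, hEdef]
    have hstep1 : Matrix.diagonal (fun j => (T j j * x j)⁻¹)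
        * Matrix.diagonal (fun i => T i i * x i) = 1 := by
      rw [Matrix.diagonal_mul_diagonal]
      have : (fun j => (T j j * x j)⁻¹ * (T j j * x j)) = fun _ => (1:ℝ) :=
        funext fun j => inv_mul_cancel₀ (hdpos j).ne'
      rw [this, Matrix.diagonal_one]
    have hstep2 : (1 - B)⁻¹ * (1 - B) = 1 := Matrix.nonsing_inv_mul _ hdetC
    have hstep3 : Matrix.diagonal x * Matrix.diagonal (fun j => (x j)⁻¹) = 1 := by
      rw [Matrix.diagonal_mul_diagonal]
      have : (fun j => x j * (x j)⁻¹) = fun _ => (1:ℝ) :=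
        funext fun j => mul_inv_cancel₀ (hxpos j).ne'
      rw [this, Matrix.diagonal_one]
    calc Matrix.diagonal x * (1 - B)⁻¹ * Matrix.diagonal (fun j => (T j j * x j)⁻¹)
          * (Matrix.diagonal (fun i => T i i * x i) * (1 - B) * Matrix.diagonal fun j => (x j)⁻¹)
        = Matrix.diagonal x * (1 - B)⁻¹
          * (Matrix.diagonal (fun j => (T j j * x j)⁻¹) * Matrix.diagonal (fun i => T i i * x i))
          * ((1 - B) * Matrix.diagonal fun j => (x j)⁻¹) := by
          simp only [Matrix.mul_assoc]
      _ = Matrix.diagonal x * ((1 - B)⁻¹ * (1 - B)) * Matrix.diagonal (fun j => (x j)⁻¹) := by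
          rw [hstep1, Matrix.mul_one]
          simp only [Matrix.mul_assoc]
      _ = 1 := by rw [hstep2, Matrix.mul_one, hstep3]
  have hMT : M * T = 1 := by rw [hfact]; exact hMT'
  have hTinv : T⁻¹ = M := Matrix.inv_eq_left_inv hMT
  intro i j
  rw [hTinv, hMdef, Matrix.mul_diagonal, Matrix.diagonal_mul]
  exact mul_nonneg (mul_nonneg (hxnn i) (hCinv i j)) (inv_nonneg.mpr (hdpos j).le)
end

section
/- Let A be an n×n real H-matrix with comparison matrix M(A) (where M(A)_{ii} = |a_{ii}|, M(A)_{ij} = −|a_{ij}| for i ≠ j) a nonsingular M-matrix. Fix m < n with banded decomposition A = T_m − E_m − F_m, let D = diag(A) and R_m = T_m − D, and let a, b be complex numbers with |a| ≤ 1 and |b| ≤ 1. Then any complex vector x satisfying T_m x − a E_m x − b F_m x = 0 must be zero; in particular the matrix T_m − a E_m − b F_m is invertible. -/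
open Matrix Finset

/-- For an H-matrix A and complex scalars a, b of modulus ≤ 1, the matrix
T_m − a E_m − b F_m has trivial kernel, hence is invertible. -/
theorem Hmatrix_scaled_banded_invertible (n m : ℕ) (hm : m < n)
    (A MA T E F D R : Matrix (Fin n) (Fin n) ℝ) (a b : ℂ)
    (ha : ‖a‖ ≤ 1) (hb : ‖b‖ ≤ 1)
    (hMA : ∀ i j, MA i j = if i = j then |A i i| else -|A i j|)
    (hMAunit : IsUnit MA)
    (hMAinv : ∀ i j, 0 ≤ MA⁻¹ i j)
(hT : ∀ i j, T i j = if |(i : ℤ) - (j : ℤ)| ≤ (m : ℤ) then A i j else 0)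
    (hE : ∀ i j, E i j = if (j : ℤ) + (m : ℤ) < (i : ℤ) then -A i j else 0)
    (hF : ∀ i j, F i j = if (i : ℤ) + (m : ℤ) < (j : ℤ) then -A i j else 0)
    (hD : D = Matrix.diagonal (fun i => A i i))
    (hR : R = T - D) :
    (∀ x : Fin n → ℂ,
        ((T.map Complex.ofReal) - a • (E.map Complex.ofReal)
          - b • (F.map Complex.ofReal)).mulVec x = 0 → x = 0) ∧
      IsUnit ((T.map Complex.ofReal) - a • (E.map Complex.ofReal)
        - b • (F.map Complex.ofReal)) := by
  set B := (T.map Complex.ofReal) - a • (E.map Complex.ofReal)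
      - b • (F.map Complex.ofReal) with hBdef
  have hBij : ∀ i j, ‖B i j‖ ≤ |A i j| := by
    intro i j
    simp only [hBdef, Matrix.sub_apply, Matrix.smul_apply, Matrix.map_apply,
      hT i j, hE i j, hF i j, smul_eq_mul]
    by_cases h1 : |(i:ℤ) - j| ≤ (m:ℤ)
    · have h2 : ¬ ((j:ℤ) + m < i) := by rw [abs_le] at h1; omega
      have h3 : ¬ ((i:ℤ) + m < j) := by rw [abs_le] at h1; omega
      simp [h1, h2, h3, Complex.norm_real]
    · by_cases h2 : (j:ℤ) + m < i
      · have h3 : ¬ ((i:ℤ) + m < j) := by omega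
        simp only [h1, h2, h3, if_true, if_false, Complex.ofReal_zero,
          Complex.ofReal_neg, mul_zero, zero_sub, sub_zero, mul_neg, neg_neg]
        rw [norm_mul, Complex.norm_real, Real.norm_eq_abs]
        calc ‖a‖ * |A i j| ≤ 1 * |A i j| :=
              mul_le_mul_of_nonneg_right ha (abs_nonneg _)
          _ = |A i j| := one_mul _
      · have h3 : (i:ℤ) + m < j := by rw [abs_le] at h1; omega
        simp only [h1, h2, h3, if_true, if_false, Complex.ofReal_zero,
          Complex.ofReal_neg, mul_zero, zero_sub, sub_zero, mul_neg, neg_neg,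
          zero_mul, neg_zero, zero_add]
        rw [norm_mul, Complex.norm_real, Real.norm_eq_abs]
        calc ‖b‖ * |A i j| ≤ 1 * |A i j| :=
              mul_le_mul_of_nonneg_right hb (abs_nonneg _)
          _ = |A i j| := one_mul _
  have hBii : ∀ i, B i i = (A i i : ℂ) := by
    intro i
    simp [hBdef, hT i i, hE i i, hF i i, show ¬((m:ℤ) < 0) from by omega]
  have key : ∀ x : Fin n → ℂ, B.mulVec x = 0 → x = 0 := by
    intro x hx
    set y : Fin n → ℝ := fun i => ‖x i‖ with hy
    have hMy : ∀ i, MA.mulVec y i ≤ 0 := by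
      intro i
      have h0 : ∑ j, B i j * x j = 0 := congrFun hx i
      have hsplit : B i i * x i = -∑ j ∈ univ.erase i, B i j * x j := by
        rw [eq_neg_iff_add_eq_zero, ← Finset.add_sum_erase univ _ (mem_univ i)] at *
        exact h0
      have habs : |A i i| * y i ≤ ∑ j ∈ univ.erase i, |A i j| * y j := by
        have h1 : |A i i| * y i = ‖B i i * x i‖ := by
          rw [norm_mul, hBii, Complex.norm_real, Real.norm_eq_abs]
        rw [h1, hsplit, norm_neg]
        calc ‖∑ j ∈ univ.erase i, B i j * x j‖
            ≤ ∑ j ∈ univ.erase i, ‖B i j * x j‖ := by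
              exact norm_sum_le _ _
          _ ≤ ∑ j ∈ univ.erase i, |A i j| * y j := by
              refine Finset.sum_le_sum fun j _ => ?_
              rw [norm_mul]
              exact mul_le_mul_of_nonneg_right (hBij i j) (norm_nonneg _)
      have : MA.mulVec y i
          = |A i i| * y i + ∑ j ∈ univ.erase i, (-|A i j|) * y j := by
        rw [Matrix.mulVec, dotProduct,
          ← Finset.add_sum_erase univ _ (mem_univ i), hMA i i, if_pos rfl]
        congr 1
        refine Finset.sum_congr rfl fun j hj => ?_
        rw [hMA i j, if_neg (Finset.ne_of_mem_erase hj).symm]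
      rw [this]
      have : ∑ j ∈ univ.erase i, (-|A i j|) * y j
          = -∑ j ∈ univ.erase i, |A i j| * y j := by
        rw [← Finset.sum_neg_distrib]
        exact Finset.sum_congr rfl fun j _ => by ring
      rw [this]
      linarith
    have hdet : IsUnit MA.det := (Matrix.isUnit_iff_isUnit_det MA).mp hMAunit
    have hyeq : y = (MA⁻¹).mulVec (MA.mulVec y) := by
      rw [Matrix.mulVec_mulVec, Matrix.nonsing_inv_mul _ hdet, Matrix.one_mulVec]
    have hyle : ∀ i, y i ≤ 0 := by
      intro i
      have : y i = ∑ j, MA⁻¹ i j * MA.mulVec y j := by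
        conv_lhs => rw [hyeq]
        rfl
      rw [this]
      refine Finset.sum_nonpos fun j _ => mul_nonpos_of_nonneg_of_nonpos (hMAinv i j) (hMy j)
    funext i
    have h1 : y i = 0 := le_antisymm (hyle i) (norm_nonneg _)
    exact norm_eq_zero.mp h1
  refine ⟨key, ?_⟩
  rw [← Matrix.mulVec_injective_iff_isUnit]
  intro u v huv
  have : B.mulVec (u - v) = 0 := by
    rw [Matrix.mulVec_sub, huv, sub_self]
  have := key _ this
  exact sub_eq_zero.mp this
end
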